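/- arXiv:1605.07769 — 5 statements merged into one kernel-verified Lean document; each statement's English description precedes it below -/
import Mathlib

section
/- Let H be an algebraic subgroup of an affine algebraic group G over a field k. If H is affine epimorphic in G, then O(G/H) = k, i.e., the only global regular functions on the quotient G/H are the constants. -/
open TensorProduct
set_option maxHeartbeats 1000000
set_option synthInstance.maxHeartbeats 1000000


/-!
We use the standard anti-equivalence between affine algebraic groups over a field `k`
and finitely generated commutative Hopf `k`-algebras.  An affine algebraic group `G`
corresponds to its Hopf algebra `A = O(G)`, a closed subgroup `H ⊂ G` to a surjective
Hopf algebra map `π : O(G) → O(H)`, a homomorphism `G → G'` to a Hopf algebra map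
`O(G') → O(G)`, and a finite-dimensional `G`-module to a finite-dimensional
`A`-comodule.  `O(G/H)` is identified with the right `H`-invariants of `O(G)`.
-/

/-- The right `H`-invariants `O(G)^H ⊆ O(G)`, i.e. `O(G/H)`, for the subgroup
corresponding to the surjection `π : O(G) → O(H)`. -/
def rightInvariants (k A B : Type) [Field k] [CommRing A] [HopfAlgebra k A]
    [CommRing B] [HopfAlgebra k B] (π : A →ₐc[k] B) : Set A :=
  {a | LinearMap.lTensor A (π : A →ₗ[k] B) (Coalgebra.comul (R := k) a) = a ⊗ₜ[k] (1 : B)}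

/-- A (rational) representation of the affine group scheme with Hopf algebra `A`,
i.e. a right `A`-comodule structure on `V`. -/
structure RationalRep (k A V : Type) [Field k] [CommRing A] [HopfAlgebra k A]
    [AddCommGroup V] [Module k V] where
  ρ : V →ₗ[k] V ⊗[k] A
  coassoc : (TensorProduct.assoc k V A A).toLinearMap ∘ₗ LinearMap.rTensor A ρ ∘ₗ ρ
      = LinearMap.lTensor V (Coalgebra.comul (R := k)) ∘ₗ ρ
  counit : (TensorProduct.rid k V).toLinearMap ∘ₗ
      LinearMap.lTensor V (Coalgebra.counit (R := k)) ∘ₗ ρ = LinearMap.id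

/-- The fixed points `V^G` of a rational representation. -/
def RationalRep.fixedPoints {k A V : Type} [Field k] [CommRing A] [HopfAlgebra k A]
    [AddCommGroup V] [Module k V] (r : RationalRep k A V) : Set V :=
  {v | r.ρ v = v ⊗ₜ[k] (1 : A)}

/-- The fixed points `V^H` of (the restriction to `H` of) a rational representation of
`G`, where `H` corresponds to the surjection `π : O(G) → O(H)`. -/
def RationalRep.fixedPointsUnder {k A B V : Type} [Field k] [CommRing A] [HopfAlgebra k A]
    [CommRing B] [HopfAlgebra k B] [AddCommGroup V] [Module k V]
    (π : A →ₐc[k] B) (r : RationalRep k A V) : Set V :=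
  {v | LinearMap.lTensor V (π : A →ₗ[k] B) (r.ρ v) = v ⊗ₜ[k] (1 : B)}

/-- `W` is a `G`-submodule of the representation `r`. -/
def RationalRep.IsSubrep {k A V : Type} [Field k] [CommRing A] [HopfAlgebra k A]
    [AddCommGroup V] [Module k V] (r : RationalRep k A V) (W : Submodule k V) : Prop :=
  ∀ v ∈ W, r.ρ v ∈ LinearMap.range (LinearMap.rTensor A W.subtype)

/-- `W` is an `H`-submodule of (the restriction of) the representation `r`, where `H`
corresponds to the surjection `π : O(G) → O(H)`. -/
def RationalRep.IsSubrepUnder {k A B V : Type} [Field k] [CommRing A] [HopfAlgebra k A]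
    [CommRing B] [HopfAlgebra k B] [AddCommGroup V] [Module k V]
    (π : A →ₐc[k] B) (r : RationalRep k A V) (W : Submodule k V) : Prop :=
  ∀ v ∈ W, LinearMap.lTensor V (π : A →ₗ[k] B) (r.ρ v) ∈
    LinearMap.range (LinearMap.rTensor B W.subtype)

/-- `H` is (affine) epimorphic in `G`: any two morphisms from `G` to an affine algebraic
group agreeing on `H` are equal.  In Hopf algebra terms: any two Hopf algebra maps
`O(G') → O(G)` with equal composites with `π : O(G) → O(H)` are equal. -/
def IsAffineEpimorphic (k A B : Type) [Field k] [CommRing A] [HopfAlgebra k A]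
    [CommRing B] [HopfAlgebra k B] (π : A →ₐc[k] B) : Prop :=
  ∀ (A' : Type) (_ : CommRing A') (_ : HopfAlgebra k A') (_ : Algebra.FiniteType k A')
    (φ₁ φ₂ : A' →ₐc[k] A), π.comp φ₁ = π.comp φ₂ → φ₁ = φ₂


section Aux

open TensorProduct Coalgebra

set_option linter.unusedSectionVars false

noncomputable section ConvSection

variable {R : Type} [CommRing R]

lemma map_comp_left_apply {M N P Q Q' : Type} [AddCommGroup M] [AddCommGroup N] [AddCommGroup P]
    [AddCommGroup Q] [AddCommGroup Q'] [Module R M] [Module R N] [Module R P] [Module R Q]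
    [Module R Q'] (f₂ : N →ₗ[R] P) (f₁ : M →ₗ[R] N) (h : Q →ₗ[R] Q') (t : M ⊗[R] Q) :
    TensorProduct.map (f₂ ∘ₗ f₁) h t = TensorProduct.map f₂ h (LinearMap.rTensor Q f₁ t) := by
  induction t with
  | zero => simp
  | tmul x y => simp
  | add x y hx hy => rw [map_add, map_add, map_add, hx, hy]

lemma map_comp_right_apply {M N P Q Q' : Type} [AddCommGroup M] [AddCommGroup N] [AddCommGroup P]
    [AddCommGroup Q] [AddCommGroup Q'] [Module R M] [Module R N] [Module R P] [Module R Q]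
    [Module R Q'] (f₂ : N →ₗ[R] P) (f₁ : M →ₗ[R] N) (h : Q →ₗ[R] Q') (t : Q ⊗[R] M) :
    TensorProduct.map h (f₂ ∘ₗ f₁) t = TensorProduct.map h f₂ (LinearMap.lTensor Q f₁ t) := by
  induction t with
  | zero => simp
  | tmul x y => simp
  | add x y hx hy => rw [map_add, map_add, map_add, hx, hy]

variable {C : Type} [AddCommGroup C] [Module R C] [Coalgebra R C]
  {A : Type} [CommRing A] [Algebra R A]

/-- Convolution product of linear maps from a coalgebra to an algebra. -/
noncomputable def conv (f g : C →ₗ[R] A) : C →ₗ[R] A :=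
  LinearMap.mul' R A ∘ₗ TensorProduct.map f g ∘ₗ Coalgebra.comul

lemma conv_apply (f g : C →ₗ[R] A) (x : C) :
    conv f g x = LinearMap.mul' R A (TensorProduct.map f g (Coalgebra.comul x)) := rfl

lemma conv_assoc (f g h : C →ₗ[R] A) : conv (conv f g) h = conv f (conv g h) := by
  ext x
  have key : (LinearMap.mul' R A ∘ₗ
        TensorProduct.map (LinearMap.mul' R A ∘ₗ TensorProduct.map f g) h)
        ∘ₗ (TensorProduct.assoc R C C C).symm.toLinearMap
      = LinearMap.mul' R A ∘ₗ TensorProduct.map f (LinearMap.mul' R A ∘ₗ TensorProduct.map g h) := by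
    have h2 : ((LinearMap.mul' R A ∘ₗ
        TensorProduct.map (LinearMap.mul' R A ∘ₗ TensorProduct.map f g) h)
        ∘ₗ (TensorProduct.assoc R C C C).symm.toLinearMap)
        ∘ₗ (TensorProduct.assoc R C C C).toLinearMap
        = (LinearMap.mul' R A ∘ₗ TensorProduct.map f (LinearMap.mul' R A ∘ₗ TensorProduct.map g h))
        ∘ₗ (TensorProduct.assoc R C C C).toLinearMap :=
      TensorProduct.ext_threefold (fun x y z => by simp [mul_assoc])
    refine LinearMap.ext fun t => ?_
    have := LinearMap.congr_fun h2 ((TensorProduct.assoc R C C C).symm t)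
    simpa using this
  have e1 : conv (conv f g) h x = LinearMap.mul' R A
      (TensorProduct.map (LinearMap.mul' R A ∘ₗ TensorProduct.map f g) h
        (LinearMap.rTensor C Coalgebra.comul (Coalgebra.comul x))) := by
    rw [conv_apply]
    congr 1
    have h4 : conv f g = (LinearMap.mul' R A ∘ₗ TensorProduct.map f g) ∘ₗ Coalgebra.comul := rfl
    rw [h4, map_comp_left_apply]
  rw [e1, ← Coalgebra.coassoc_symm_apply (R := R) x]
  have := LinearMap.congr_fun key
      (LinearMap.lTensor C (Coalgebra.comul (R := R)) (Coalgebra.comul x))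
  simp only [LinearMap.comp_apply, LinearEquiv.coe_coe] at this
  rw [this, conv_apply]
  congr 1
  have h3 : conv g h = (LinearMap.mul' R A ∘ₗ TensorProduct.map g h) ∘ₗ Coalgebra.comul := rfl
  rw [h3, map_comp_right_apply (LinearMap.mul' R A ∘ₗ TensorProduct.map g h) Coalgebra.comul]

/-- unit for convolution -/
noncomputable def convUnit : C →ₗ[R] A :=
  Algebra.linearMap R A ∘ₗ Coalgebra.counit

lemma conv_unit_left (f : C →ₗ[R] A) : conv convUnit f = f := by
  ext x
  rw [conv_apply]
  have h1 : convUnit (R := R) (C := C) (A := A) = Algebra.linearMap R A ∘ₗ Coalgebra.counit := rfl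
  rw [h1, map_comp_left_apply, Coalgebra.rTensor_counit_comul]
  simp

lemma conv_unit_right (f : C →ₗ[R] A) : conv f convUnit = f := by
  ext x
  rw [conv_apply]
  have h1 : convUnit (R := R) (C := C) (A := A) = Algebra.linearMap R A ∘ₗ Coalgebra.counit := rfl
  rw [h1, map_comp_right_apply, Coalgebra.lTensor_counit_comul]
  simp [Algebra.commutes]

lemma conv_eq_of_inv {f g h : C →ₗ[R] A} (h1 : conv f h = convUnit) (h2 : conv h g = convUnit) :
    f = g := by
  have h3 := conv_assoc f h g
  rw [h1, h2, conv_unit_left, conv_unit_right] at h3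
  exact h3.symm

end ConvSection

noncomputable section AntipodeMul

open HopfAlgebra

variable (R : Type) [CommRing R] (A : Type) [CommRing A] [HopfAlgebra R A]

local notation "μ" => LinearMap.mul' R A
local notation "S" => HopfAlgebra.antipode (R := R) (A := A)
local notation "Δ" => Coalgebra.comul (R := R) (A := A)

/-- `tensorTensorTensorComm` as a linear map. -/
noncomputable def L4 : (A ⊗[R] A) ⊗[R] (A ⊗[R] A) →ₗ[R] (A ⊗[R] A) ⊗[R] (A ⊗[R] A) :=
  (TensorProduct.tensorTensorTensorComm R A A A A).toLinearMap

@[simp] lemma L4_tmul (a b c d : A) :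
    L4 R A ((a ⊗ₜ b) ⊗ₜ (c ⊗ₜ d)) = (a ⊗ₜ c) ⊗ₜ (b ⊗ₜ d) := rfl

lemma comulC_eq (t : A ⊗[R] A) :
    Coalgebra.comul (R := R) (A := A ⊗[R] A) t = L4 R A (TensorProduct.map Δ Δ t) := rfl

lemma counitC_tmul (x y : A) : Coalgebra.counit (R := R) (A := A ⊗[R] A) (x ⊗ₜ y)
    = Coalgebra.counit (R := R) x * Coalgebra.counit (R := R) y := by
  simp [LinearMap.mul'_apply, mul_comm]

lemma K0 : LinearMap.mul' R (A ⊗[R] A) = (TensorProduct.map μ μ) ∘ₗ L4 R A := by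
  apply TensorProduct.ext'
  intro u v
  simp only [LinearMap.mul'_apply, LinearMap.comp_apply]
  induction u with
  | zero => simp
  | add x y hx hy => simp_all [add_mul, add_tmul, map_add]
  | tmul a b =>
    induction v with
    | zero => simp
    | add x y hx hy => simp_all [mul_add, tmul_add, map_add]
    | tmul c d => simp [Algebra.TensorProduct.tmul_mul_tmul]

lemma K1 : TensorProduct.map μ μ ∘ₗ (Coalgebra.comul (R := R) (A := A ⊗[R] A)) =
    Δ ∘ₗ μ := by
  apply TensorProduct.ext'
  intro x y
  have h1 : Coalgebra.comul (R := R) (A := A ⊗[R] A) (x ⊗ₜ y)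
      = L4 R A (Δ x ⊗ₜ Δ y) := rfl
  have h2 := LinearMap.congr_fun (K0 R A) ((Δ x) ⊗ₜ[R] (Δ y))
  simp only [LinearMap.comp_apply] at h2 ⊢
  rw [h1, ← h2, LinearMap.mul'_apply, LinearMap.mul'_apply, Bialgebra.comul_mul]

lemma K2 (t : A ⊗[R] A) : Coalgebra.counit (R := R) (A := A ⊗[R] A) t
    = Coalgebra.counit (R := R) (μ t) := by
  induction t with
  | zero => simp
  | add x y hx hy => simp_all [map_add]
  | tmul x y => simp [counitC_tmul, LinearMap.mul'_apply, Bialgebra.counit_mul, mul_comm]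

lemma convA1 : conv ((S) ∘ₗ μ) μ = convUnit := by
  refine LinearMap.ext fun t => ?_
  rw [conv_apply, map_comp_left_apply]
  have hB : TensorProduct.map ((S) ∘ₗ μ) μ = LinearMap.rTensor A (S) ∘ₗ TensorProduct.map μ μ := by
    rw [LinearMap.rTensor, ← TensorProduct.map_comp, LinearMap.id_comp]
  have h1 : TensorProduct.map (S) μ
        (LinearMap.rTensor (A ⊗[R] A) μ (Coalgebra.comul (R := R) (A := A ⊗[R] A) t))
      = LinearMap.rTensor A (S)
        (TensorProduct.map μ μ (Coalgebra.comul (R := R) (A := A ⊗[R] A) t)) := by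
    rw [← map_comp_left_apply (S) μ μ]
    exact LinearMap.congr_fun hB _
  rw [h1, ← LinearMap.comp_apply (TensorProduct.map μ μ), K1]
  simp only [LinearMap.comp_apply, mul_antipode_rTensor_comul_apply]
  rw [show convUnit t = algebraMap R A (Coalgebra.counit (R := R) (A := A ⊗[R] A) t) from rfl, K2]

lemma convA2 : conv μ (μ ∘ₗ TensorProduct.map (S) (S)) = convUnit := by
  refine LinearMap.ext fun t => ?_
  rw [conv_apply, comulC_eq]
  have K3 : μ ∘ₗ TensorProduct.map μ (μ ∘ₗ TensorProduct.map (S) (S)) ∘ₗ L4 R A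
      = μ ∘ₗ TensorProduct.map (μ ∘ₗ LinearMap.lTensor A (S)) (μ ∘ₗ LinearMap.lTensor A (S)) := by
    apply TensorProduct.ext'
    intro u v
    simp only [LinearMap.comp_apply]
    induction u with
    | zero => simp
    | add x y hx hy => simp_all [add_tmul, map_add, add_mul]
    | tmul a b =>
      induction v with
      | zero => simp
      | add x y hx hy => simp_all [tmul_add, map_add, mul_add]
      | tmul c d =>
        simp only [L4_tmul, TensorProduct.map_tmul, LinearMap.comp_apply,
          LinearMap.mul'_apply, LinearMap.lTensor_tmul]
        ring
  have hK3 := LinearMap.congr_fun K3 (TensorProduct.map Δ Δ t)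
  simp only [LinearMap.comp_apply] at hK3
  rw [hK3]
  have h4 : TensorProduct.map (μ ∘ₗ LinearMap.lTensor A (S)) (μ ∘ₗ LinearMap.lTensor A (S))
        ∘ₗ TensorProduct.map Δ Δ
      = TensorProduct.map (Algebra.linearMap R A ∘ₗ Coalgebra.counit)
          (Algebra.linearMap R A ∘ₗ Coalgebra.counit) := by
    rw [← TensorProduct.map_comp]
    congr 1 <;>
    · refine LinearMap.ext fun x => ?_
      simp only [LinearMap.comp_apply]
      exact mul_antipode_lTensor_comul_apply (R := R) x
  have h4' := LinearMap.congr_fun h4 t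
  simp only [LinearMap.comp_apply] at h4'
  rw [h4']
  have h5 : μ ∘ₗ TensorProduct.map (Algebra.linearMap R A ∘ₗ Coalgebra.counit)
        (Algebra.linearMap R A ∘ₗ Coalgebra.counit)
      = Algebra.linearMap R A ∘ₗ (Coalgebra.counit (R := R) (A := A ⊗[R] A)) := by
    apply TensorProduct.ext'
    intro x y
    simp [counitC_tmul, LinearMap.mul'_apply, map_mul, mul_comm]
  have h5' := LinearMap.congr_fun h5 t
  simp only [LinearMap.comp_apply] at h5'
  rw [h5']
  rfl

lemma antipode_comp_mul : (S) ∘ₗ μ = μ ∘ₗ TensorProduct.map (S) (S) :=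
  conv_eq_of_inv (convA1 R A) (convA2 R A)

lemma antipode_mul' (x y : A) :
    HopfAlgebra.antipode (R := R) (x * y) =
      HopfAlgebra.antipode (R := R) x * HopfAlgebra.antipode (R := R) y := by
  have h := LinearMap.congr_fun (antipode_comp_mul R A) (x ⊗ₜ y)
  simpa using h

lemma antipode_one' : HopfAlgebra.antipode (R := R) (A := A) 1 = 1 := by
  have h := mul_antipode_rTensor_comul_apply (R := R) (A := A) (1 : A)
  simp only [Bialgebra.comul_one, Algebra.TensorProduct.one_def, LinearMap.rTensor_tmul,
    LinearMap.mul'_apply, Bialgebra.counit_one, map_one, mul_one] at h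
  exact h

/-- The antipode of a commutative Hopf algebra, as an algebra hom. -/
noncomputable def antipodeAlgHom : A →ₐ[R] A :=
  AlgHom.ofLinearMap (HopfAlgebra.antipode (R := R)) (antipode_one' R A) (antipode_mul' R A)

@[simp] lemma antipodeAlgHom_apply (x : A) :
    _root_.antipodeAlgHom R A x = HopfAlgebra.antipode (R := R) x := rfl

end AntipodeMul

noncomputable section Expansion

variable {k : Type} [Field k]

/-- Expansion of a tensor `M ⊗ W` along a basis of `W`. -/
noncomputable def texp {W M ι : Type} [AddCommGroup W] [Module k W] [AddCommGroup M] [Module k M]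
    [DecidableEq ι] (ℬ : Module.Basis ι k W) : M ⊗[k] W ≃ₗ[k] (ι →₀ M) :=
  (TensorProduct.congr (LinearEquiv.refl k M) ℬ.repr).trans (TensorProduct.finsuppScalarRight k k M ι)

variable {W M ι : Type} [AddCommGroup W] [Module k W] [AddCommGroup M] [Module k M]
  [DecidableEq ι] (ℬ : Module.Basis ι k W)

/-- The `i`-th coefficient of a tensor with respect to a basis of the right factor. -/
noncomputable def tcoef (i : ι) : M ⊗[k] W →ₗ[k] M :=
  (Finsupp.lapply i) ∘ₗ (texp ℬ).toLinearMap

lemma tcoef_tmul (i : ι) (x : M) (w : W) : tcoef ℬ i (x ⊗ₜ w) = ℬ.repr w i • x := by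
  simp [tcoef, texp, TensorProduct.finsuppScalarRight_apply_tmul_apply]

lemma tcoef_apply (i : ι) (t : M ⊗[k] W) : tcoef ℬ i t = texp ℬ t i := rfl

lemma texp_symm_apply (g : ι →₀ M) : (texp ℬ).symm g = g.sum fun i x => x ⊗ₜ[k] ℬ i := by
  induction g using Finsupp.induction_linear with
  | zero => simp
  | add f g hf hg =>
      rw [map_add, hf, hg, Finsupp.sum_add_index' (by simp) (by intros; rw [add_tmul])]
  | single i m =>
      rw [Finsupp.sum_single_index (by simp)]
      simp only [texp, LinearEquiv.trans_symm, LinearEquiv.trans_apply,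
        TensorProduct.finsuppScalarRight_symm_apply_single]
      rw [TensorProduct.congr_symm_tmul]
      simp

lemma texp_reconstruct (t : M ⊗[k] W) :
    t = ∑ i ∈ (texp ℬ t).support, tcoef ℬ i t ⊗ₜ[k] ℬ i := by
  conv_lhs => rw [← (texp ℬ).symm_apply_apply t, texp_symm_apply]
  rfl

/-- coefficient extraction commutes with the associator -/
lemma tcoef_assoc {N : Type} [AddCommGroup N] [Module k N] (i : ι)
    (t : (M ⊗[k] N) ⊗[k] W) :
    LinearMap.lTensor M (tcoef ℬ i) ((TensorProduct.assoc k M N W) t)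
      = tcoef ℬ i t := by
  have h : LinearMap.lTensor M (tcoef ℬ i) ∘ₗ (TensorProduct.assoc k M N W).toLinearMap
      = tcoef (M := M ⊗[k] N) ℬ i :=
    TensorProduct.ext_threefold fun x y w => by
      simp [tcoef_tmul, TensorProduct.tmul_smul]
  exact LinearMap.congr_fun h t

end Expansion

noncomputable section Extraction

open Coalgebra

variable {k : Type} [Field k] {A : Type} [CommRing A] [HopfAlgebra k A]

theorem exists_comodule_data (a : A) :
    ∃ (n : ℕ) (e : Fin n → A) (α : Fin n → k) (m : Fin n → Fin n → A),
      (a = ∑ i, α i • e i) ∧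
      (∀ i, Coalgebra.comul (R := k) (e i) = ∑ j, e j ⊗ₜ[k] m j i) ∧
      (∀ (M : Type) (_ : AddCommGroup M) (_ : Module k M) (t u : Fin n → M),
        (∑ j, e j ⊗ₜ[k] t j = ∑ j, e j ⊗ₜ[k] u j) → t = u) := by
  classical
  set ℬ := Module.Basis.ofVectorSpace k A with hℬ
  set s := (texp ℬ (Coalgebra.comul (R := k) a)).support with hs
  set b : _ → A := fun i => tcoef ℬ i (Coalgebra.comul (R := k) a) with hb
  have h_a_exp : Coalgebra.comul (R := k) a = ∑ i ∈ s, b i ⊗ₜ[k] ℬ i := texp_reconstruct ℬ _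
  set p : _ → _ → A := fun β γ => tcoef ℬ γ (Coalgebra.comul (R := k) ((ℬ : _ → A) β)) with hp
  -- comul of the coefficients
  have h_comul_b : ∀ γ ∈ s, Coalgebra.comul (R := k) (b γ) = ∑ β ∈ s, b β ⊗ₜ[k] p β γ := by
    intro γ hγ
    have h0 := Coalgebra.coassoc_apply (R := k) a
    have h1 := congrArg (LinearMap.lTensor A (tcoef ℬ γ)) h0
    rw [tcoef_assoc] at h1
    -- left side
    have h2 : tcoef (M := A ⊗[k] A) ℬ γ
        (LinearMap.rTensor A (Coalgebra.comul (R := k)) (Coalgebra.comul (R := k) a))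
        = Coalgebra.comul (R := k) (b γ) := by
      rw [h_a_exp, map_sum]
      simp only [LinearMap.rTensor_tmul, map_sum, tcoef_tmul]
      rw [Finset.sum_congr rfl (fun i _ => by
        rw [Module.Basis.repr_self, Finsupp.single_apply, ite_smul, one_smul, zero_smul])]
      rw [Finset.sum_ite_eq' s γ (fun i => Coalgebra.comul (R := k) (b i))]
      simp [hγ]
    -- right side
    have h3 : LinearMap.lTensor A (tcoef ℬ γ)
        (LinearMap.lTensor A (Coalgebra.comul (R := k)) (Coalgebra.comul (R := k) a))
        = ∑ β ∈ s, b β ⊗ₜ[k] p β γ := by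
      rw [h_a_exp, map_sum, map_sum]
      simp [hp]
    rw [← h2, h1, h3]
  -- a is in the span of the b's
  have h_a_sum : a = ∑ i ∈ s, Coalgebra.counit (R := k) ((ℬ : _ → A) i) • b i := by
    have h4 := Coalgebra.lTensor_counit_comul (R := k) a
    have h5 := congrArg (TensorProduct.rid k A) h4
    rw [h_a_exp] at h5
    simp only [map_sum, LinearMap.lTensor_tmul, TensorProduct.rid_tmul, one_smul] at h5
    exact h5.symm
  set V : Submodule k A := Submodule.span k (b '' ↑s) with hV
  have h_bV : ∀ γ ∈ s, b γ ∈ V := fun γ hγ => Submodule.subset_span ⟨γ, hγ, rfl⟩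
  have haV : a ∈ V := by
    rw [h_a_sum]
    exact Submodule.sum_smul_mem V _ (fun γ hγ => h_bV γ hγ)
  have hVrange : ∀ v ∈ V, Coalgebra.comul (R := k) v ∈
      LinearMap.range (LinearMap.rTensor A V.subtype) := by
    intro v hv
    have : V ≤ Submodule.comap (Coalgebra.comul (R := k) (A := A))
        (LinearMap.range (LinearMap.rTensor A V.subtype)) := by
      rw [hV, Submodule.span_le]
      rintro - ⟨γ, hγ, rfl⟩
      simp only [SetLike.mem_coe, Submodule.mem_comap]
      refine ⟨∑ β ∈ s.attach, (⟨b β, h_bV β β.2⟩ : V) ⊗ₜ[k] p β γ, ?_⟩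
      rw [map_sum, h_comul_b γ hγ, ← Finset.sum_attach s (fun β => b β ⊗ₜ[k] p β γ)]
      simp
    exact this hv
  have : FiniteDimensional k V := FiniteDimensional.span_of_finite k ((s.finite_toSet).image b)
  set n := Module.finrank k V
  set E : Module.Basis (Fin n) k V := Module.finBasis k V with hE
  set e : Fin n → A := fun i => (E i : A) with he
  have heV : ∀ i, e i ∈ V := fun i => (E i).2
  -- comul of e i
  have Hc : ∀ i, ∃ c : Fin n → A,
      Coalgebra.comul (R := k) (e i) = ∑ j, e j ⊗ₜ[k] c j := by
    intro i
    obtain ⟨w, hw⟩ := hVrange (e i) (heV i)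
    set w' := (TensorProduct.comm k V A) w with hw'
    refine ⟨fun j => tcoef E j w', ?_⟩
    have hrec : w' = ∑ j ∈ (texp E w').support, tcoef E j w' ⊗ₜ[k] E j := texp_reconstruct E w'
    have hrec2 : w' = ∑ j, tcoef E j w' ⊗ₜ[k] E j := by
      conv_lhs => rw [hrec]
      refine Finset.sum_subset (Finset.subset_univ _) ?_
      intro j _ hj
      have hz : tcoef E j w' = 0 := by
        rw [tcoef_apply]
        exact Finsupp.notMem_support_iff.mp hj
      rw [hz, TensorProduct.zero_tmul]
    have hwrec2 : w = ∑ j, E j ⊗ₜ[k] tcoef E j w' := by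
      apply (TensorProduct.comm k V A).injective
      simp only [map_sum, TensorProduct.comm_tmul]
      rw [← hw']
      exact hrec2
    rw [← hw, hwrec2, map_sum]
    simp only [LinearMap.rTensor_tmul, Submodule.coe_subtype]
    rfl
  choose mc hmc using Hc
  set m : Fin n → Fin n → A := fun j i => mc i j with hm
  -- independence property
  obtain ⟨q, hq⟩ := Submodule.exists_isCompl V
  set proj := V.linearProjOfIsCompl q hq with hproj
  set φ : Fin n → (A →ₗ[k] k) := fun l => E.coord l ∘ₗ proj with hφ
  have hφe : ∀ l j, φ l (e j) = if j = l then 1 else 0 := by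
    intro l j
    simp only [hφ, LinearMap.comp_apply, he]
    rw [show proj (E j : A) = E j from Submodule.linearProjOfIsCompl_apply_left hq (E j)]
    simp [Module.Basis.coord_apply, Module.Basis.repr_self, Finsupp.single_apply]
  have hindep : ∀ (M : Type) (_ : AddCommGroup M) (_ : Module k M) (t u : Fin n → M),
      (∑ j, e j ⊗ₜ[k] t j = ∑ j, e j ⊗ₜ[k] u j) → t = u := by
    intro M _ _ t u htu
    funext l
    have h6 := congrArg (TensorProduct.lift ((LinearMap.lsmul k M) ∘ₗ (φ l))) htu
    simp only [map_sum, TensorProduct.lift.tmul, LinearMap.comp_apply, hφe,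
      LinearMap.lsmul_apply, ite_smul, one_smul, zero_smul, Finset.sum_ite_eq',
      Finset.mem_univ, if_true] at h6
    exact h6
  -- a as a combination of the e's
  refine ⟨n, e, fun i => E.repr ⟨a, haV⟩ i, m, ?_, ?_, hindep⟩
  · have h7 := E.sum_repr ⟨a, haV⟩
    have h8 := congrArg (V.subtype) h7
    simp only [map_sum, map_smul, Submodule.coe_subtype] at h8
    exact h8.symm
  · intro i
    rw [hmc i]
end Extraction

noncomputable section SemidirectHopf

open MvPolynomial Bialgebra Coalgebra

variable {k : Type} [Field k] {A : Type} [CommRing A] [HopfAlgebra k A] {n : ℕ}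

/-- `C` as a `k`-algebra hom. -/
noncomputable def iotaA (k A : Type) [Field k] [CommRing A] [HopfAlgebra k A] (n : ℕ) :
    A →ₐ[k] MvPolynomial (Fin n) A :=
  IsScalarTower.toAlgHom k A (MvPolynomial (Fin n) A)

@[simp] lemma iotaA_apply (x : A) : iotaA k A n x = MvPolynomial.C x := rfl

@[simp] lemma iotaA_toLin_apply (x : A) : (iotaA k A n).toLinearMap x = MvPolynomial.C x := rfl

/-- Lift to a `k`-algebra hom out of `MvPolynomial (Fin n) A`. -/
noncomputable def liftP {S : Type} [CommRing S] [Algebra k S] (f : A →ₐ[k] S)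
    (v : Fin n → S) : MvPolynomial (Fin n) A →ₐ[k] S :=
  { MvPolynomial.eval₂Hom (f : A →+* S) v with
    commutes' := fun r => by
      have h : algebraMap k (MvPolynomial (Fin n) A) r = MvPolynomial.C (algebraMap k A r) := by
        rw [IsScalarTower.algebraMap_apply k A (MvPolynomial (Fin n) A) r]
        rfl
      show MvPolynomial.eval₂Hom (f : A →+* S) v (algebraMap k (MvPolynomial (Fin n) A) r)
        = algebraMap k S r
      rw [h, MvPolynomial.eval₂Hom_C]
      exact f.commutes r }

@[simp] lemma liftP_C {S : Type} [CommRing S] [Algebra k S] (f : A →ₐ[k] S)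
    (v : Fin n → S) (x : A) : liftP f v (MvPolynomial.C x) = f x :=
  MvPolynomial.eval₂Hom_C _ _ _

@[simp] lemma liftP_X {S : Type} [CommRing S] [Algebra k S] (f : A →ₐ[k] S)
    (v : Fin n → S) (i : Fin n) : liftP f v (MvPolynomial.X i) = v i := by
  show MvPolynomial.eval₂Hom (f : A →+* S) v (MvPolynomial.X i) = v i
  simp

lemma algHom_extP {S : Type} [Semiring S] [Algebra k S]
    {φ ψ : MvPolynomial (Fin n) A →ₐ[k] S}
    (h1 : ∀ x : A, φ (MvPolynomial.C x) = ψ (MvPolynomial.C x))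
    (h2 : ∀ i, φ (MvPolynomial.X i) = ψ (MvPolynomial.X i)) : φ = ψ := by
  have h := MvPolynomial.ringHom_ext (f := φ.toRingHom) (g := ψ.toRingHom) h1 h2
  exact AlgHom.ext fun x => RingHom.congr_fun h x

/-- helper: `Algebra.TensorProduct.map` agrees with `TensorProduct.map`. -/
lemma algMap_toLin {S T U V : Type} [CommRing S] [CommRing T] [CommRing U] [CommRing V]
    [Algebra k S] [Algebra k T] [Algebra k U] [Algebra k V] (f : S →ₐ[k] U) (g : T →ₐ[k] V) :
    (Algebra.TensorProduct.map f g).toLinearMap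
      = TensorProduct.map f.toLinearMap g.toLinearMap :=
  TensorProduct.ext' fun _ _ => rfl

lemma algMap_apply {S T U V : Type} [CommRing S] [CommRing T] [CommRing U] [CommRing V]
    [Algebra k S] [Algebra k T] [Algebra k U] [Algebra k V] (f : S →ₐ[k] U) (g : T →ₐ[k] V)
    (t : S ⊗[k] T) :
    Algebra.TensorProduct.map f g t = TensorProduct.map f.toLinearMap g.toLinearMap t :=
  LinearMap.congr_fun (algMap_toLin f g) t

/-- comultiplication -/
noncomputable def comulP (m : Fin n → Fin n → A) :
    MvPolynomial (Fin n) A →ₐ[k] MvPolynomial (Fin n) A ⊗[k] MvPolynomial (Fin n) A :=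
  liftP ((Algebra.TensorProduct.map (iotaA k A n) (iotaA k A n)).comp (comulAlgHom k A))
    (fun j => MvPolynomial.X j ⊗ₜ 1 + ∑ i, (MvPolynomial.C (m j i)) ⊗ₜ MvPolynomial.X i)

@[simp] lemma comulP_C (m : Fin n → Fin n → A) (x : A) :
    comulP (k := k) m (MvPolynomial.C x)
      = TensorProduct.map (iotaA k A n).toLinearMap (iotaA k A n).toLinearMap
          (Coalgebra.comul (R := k) x) := by
  rw [comulP, liftP_C, AlgHom.comp_apply, ← algMap_apply]
  rfl

@[simp] lemma comulP_X (m : Fin n → Fin n → A) (j : Fin n) :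
    comulP (k := k) m (MvPolynomial.X j)
      = MvPolynomial.X j ⊗ₜ 1 + ∑ i, (MvPolynomial.C (m j i)) ⊗ₜ MvPolynomial.X i :=
  liftP_X _ _ _

/-- counit -/
noncomputable def counitP : MvPolynomial (Fin n) A →ₐ[k] k :=
  liftP (counitAlgHom k A) (fun _ => 0)

@[simp] lemma counitP_C (x : A) :
    counitP (n := n) (MvPolynomial.C x) = Coalgebra.counit (R := k) x := liftP_C _ _ _

@[simp] lemma counitP_X (j : Fin n) :
    counitP (k := k) (A := A) (MvPolynomial.X j) = 0 := liftP_X _ _ _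

/-- antipode -/
noncomputable def antipodeP (m : Fin n → Fin n → A) :
    MvPolynomial (Fin n) A →ₐ[k] MvPolynomial (Fin n) A :=
  liftP ((iotaA k A n).comp (antipodeAlgHom k A))
    (fun j => - ∑ i, MvPolynomial.C (HopfAlgebra.antipode (R := k) (m j i)) * MvPolynomial.X i)

@[simp] lemma antipodeP_C (m : Fin n → Fin n → A) (x : A) :
    antipodeP (k := k) m (MvPolynomial.C x)
      = MvPolynomial.C (HopfAlgebra.antipode (R := k) x) := liftP_C _ _ _

@[simp] lemma antipodeP_X (m : Fin n → Fin n → A) (j : Fin n) :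
    antipodeP (k := k) m (MvPolynomial.X j)
      = - ∑ i, MvPolynomial.C (HopfAlgebra.antipode (R := k) (m j i)) * MvPolynomial.X i :=
  liftP_X _ _ _

end SemidirectHopf

noncomputable section SemidirectHopf2

open MvPolynomial Bialgebra Coalgebra

variable {k : Type} [Field k] {A : Type} [CommRing A] [HopfAlgebra k A] {n : ℕ}

lemma map_map_apply {M N P M' N' P' : Type} [AddCommGroup M] [AddCommGroup N] [AddCommGroup P]
    [AddCommGroup M'] [AddCommGroup N'] [AddCommGroup P'] [Module k M] [Module k N] [Module k P]
    [Module k M'] [Module k N'] [Module k P'] (f₁ : M →ₗ[k] N) (f₂ : N →ₗ[k] P)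
    (g₁ : M' →ₗ[k] N') (g₂ : N' →ₗ[k] P') (t : M ⊗[k] M') :
    TensorProduct.map f₂ g₂ (TensorProduct.map f₁ g₁ t)
      = TensorProduct.map (f₂ ∘ₗ f₁) (g₂ ∘ₗ g₁) t := by
  rw [TensorProduct.map_comp]
  rfl

lemma nat_assoc {M N P M' N' P' : Type} [AddCommGroup M] [AddCommGroup N] [AddCommGroup P]
    [AddCommGroup M'] [AddCommGroup N'] [AddCommGroup P'] [Module k M] [Module k N] [Module k P]
    [Module k M'] [Module k N'] [Module k P'] (f : M →ₗ[k] M') (g : N →ₗ[k] N')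
    (h : P →ₗ[k] P') (t : (M ⊗[k] N) ⊗[k] P) :
    TensorProduct.assoc k M' N' P' (TensorProduct.map (TensorProduct.map f g) h t)
      = TensorProduct.map f (TensorProduct.map g h) (TensorProduct.assoc k M N P t) := by
  have key : (TensorProduct.assoc k M' N' P').toLinearMap ∘ₗ
        TensorProduct.map (TensorProduct.map f g) h
      = TensorProduct.map f (TensorProduct.map g h) ∘ₗ (TensorProduct.assoc k M N P).toLinearMap :=
    TensorProduct.ext_threefold fun x y z => by simp
  exact LinearMap.congr_fun key t

lemma algAssoc_apply {S : Type} [CommRing S] [Algebra k S] (t : (S ⊗[k] S) ⊗[k] S) :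
    Algebra.TensorProduct.assoc k k k S S S t = TensorProduct.assoc k S S S t := by
  have key : (Algebra.TensorProduct.assoc k k k S S S).toLinearMap
      = (TensorProduct.assoc k S S S).toLinearMap :=
    TensorProduct.ext_threefold fun x y z => by simp
  exact LinearMap.congr_fun key t

lemma comulP_comp_iota (m : Fin n → Fin n → A) :
    (comulP (k := k) m).toLinearMap ∘ₗ (iotaA k A n).toLinearMap
      = TensorProduct.map (iotaA k A n).toLinearMap (iotaA k A n).toLinearMap
          ∘ₗ (Coalgebra.comul (R := k) (A := A)) :=
  LinearMap.ext fun x => comulP_C m x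

/-- The coalgebra structure on `MvPolynomial (Fin n) A`. -/
noncomputable def coalgebraP (m : Fin n → Fin n → A)
    (hm1 : ∀ j i, Coalgebra.comul (R := k) (m j i) = ∑ l, m j l ⊗ₜ[k] m l i)
    (hm2 : ∀ j i, Coalgebra.counit (R := k) (m j i) = if j = i then (1:k) else 0) :
    Coalgebra k (MvPolynomial (Fin n) A) where
  comul := (comulP m).toLinearMap
  counit := counitP.toLinearMap
  coassoc := by
    set ι := (iotaA k A n).toLinearMap with hι
    have key : ((Algebra.TensorProduct.assoc k k k (MvPolynomial (Fin n) A) (MvPolynomial (Fin n) A) (MvPolynomial (Fin n) A)).toAlgHom.comp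
          ((Algebra.TensorProduct.map (comulP (k := k) m) (AlgHom.id k (MvPolynomial (Fin n) A))).comp (comulP (k := k) m)))
        = (Algebra.TensorProduct.map (AlgHom.id k (MvPolynomial (Fin n) A)) (comulP (k := k) m)).comp (comulP (k := k) m) := by
      apply algHom_extP
      · intro x
        simp only [AlgHom.comp_apply, AlgEquiv.toAlgHom_eq_coe, AlgHom.coe_coe, AlgEquiv.coe_toAlgHom]
        rw [comulP_C, algMap_apply, algMap_apply, map_map_apply, map_map_apply,
          AlgHom.toLinearMap_id]
        simp only [LinearMap.id_comp]
        rw [← hι, comulP_comp_iota]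
        have h2 : TensorProduct.map (TensorProduct.map ι ι ∘ₗ Coalgebra.comul) ι
              (Coalgebra.comul (R := k) x)
            = TensorProduct.map (TensorProduct.map ι ι) ι
              (LinearMap.rTensor A (Coalgebra.comul (R := k)) (Coalgebra.comul (R := k) x)) :=
          map_comp_left_apply _ _ _ _
        rw [h2, algAssoc_apply, nat_assoc, Coalgebra.coassoc_apply]
        have h3 : TensorProduct.map ι (TensorProduct.map ι ι ∘ₗ Coalgebra.comul)
              (Coalgebra.comul (R := k) x)
            = TensorProduct.map ι (TensorProduct.map ι ι)
              (LinearMap.lTensor A (Coalgebra.comul (R := k)) (Coalgebra.comul (R := k) x)) :=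
          map_comp_right_apply _ _ _ _
        rw [h3]
      · intro j
        simp only [AlgHom.comp_apply, AlgEquiv.toAlgHom_eq_coe, AlgHom.coe_coe]
        rw [comulP_X]
        simp only [map_add, map_sum, Algebra.TensorProduct.map_tmul, AlgHom.coe_id, id_eq,
          map_one, comulP_X, comulP_C, hm1, map_sum, TensorProduct.map_tmul]
        simp only [add_tmul, TensorProduct.sum_tmul, map_add, map_sum,
          Algebra.TensorProduct.assoc_tmul, iotaA_apply]
        simp only [TensorProduct.tmul_add, TensorProduct.tmul_sum,
          Algebra.TensorProduct.one_def, iotaA_toLin_apply, Finset.sum_add_distrib]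
        conv_lhs => rw [Finset.sum_comm]
        abel
    refine LinearMap.ext fun x => ?_
    have hx := AlgHom.congr_fun key x
    simp only [AlgHom.comp_apply, AlgEquiv.toAlgHom_eq_coe, AlgHom.coe_coe, AlgEquiv.coe_toAlgHom] at hx
    rw [algMap_apply, algMap_apply, algAssoc_apply, AlgHom.toLinearMap_id] at hx
    exact hx
  rTensor_counit_comp_comul := by
    set ι := (iotaA k A n).toLinearMap with hι
    have key : ((Algebra.TensorProduct.map (counitP (k := k) (A := A) (n := n))
            (AlgHom.id k (MvPolynomial (Fin n) A))).comp (comulP (k := k) m))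
        = Algebra.TensorProduct.includeRight := by
      apply algHom_extP
      · intro x
        simp only [AlgHom.comp_apply, Algebra.TensorProduct.includeRight_apply]
        rw [comulP_C, algMap_apply, map_map_apply, AlgHom.toLinearMap_id, LinearMap.id_comp]
        have h1 : counitP.toLinearMap ∘ₗ ι = Coalgebra.counit (R := k) (A := A) :=
          LinearMap.ext fun y => counitP_C y
        rw [h1]
        have h2 : TensorProduct.map (Coalgebra.counit (R := k) (A := A)) ι
              (Coalgebra.comul (R := k) x)
            = TensorProduct.map LinearMap.id ι
              (LinearMap.rTensor A (Coalgebra.counit (R := k)) (Coalgebra.comul (R := k) x)) := by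
          have := map_comp_left_apply (R := k) LinearMap.id
            (Coalgebra.counit (R := k) (A := A)) ι (Coalgebra.comul (R := k) x)
          rw [LinearMap.id_comp] at this
          exact this
        rw [h2, Coalgebra.rTensor_counit_comul]
        rfl
      · intro j
        simp only [AlgHom.comp_apply, Algebra.TensorProduct.includeRight_apply]
        rw [comulP_X]
        simp only [map_add, map_sum, Algebra.TensorProduct.map_tmul, AlgHom.coe_id, id_eq,
          map_one, counitP_X, counitP_C, hm2]
        rw [TensorProduct.zero_tmul]
        simp only [ite_tmul, zero_add]
        rw [Finset.sum_ite_eq]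
        simp
    refine LinearMap.ext fun x => ?_
    have hx := AlgHom.congr_fun key x
    simp only [AlgHom.comp_apply, Algebra.TensorProduct.includeRight_apply] at hx
    rw [algMap_apply, AlgHom.toLinearMap_id] at hx
    exact hx
  lTensor_counit_comp_comul := by
    set ι := (iotaA k A n).toLinearMap with hι
    have key : ((Algebra.TensorProduct.map (AlgHom.id k (MvPolynomial (Fin n) A))
            (counitP (k := k) (A := A) (n := n))).comp (comulP (k := k) m))
        = Algebra.TensorProduct.includeLeft := by
      apply algHom_extP
      · intro x
        simp only [AlgHom.comp_apply, Algebra.TensorProduct.includeLeft_apply]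
        rw [comulP_C, algMap_apply, map_map_apply, AlgHom.toLinearMap_id, LinearMap.id_comp]
        have h1 : counitP.toLinearMap ∘ₗ ι = Coalgebra.counit (R := k) (A := A) :=
          LinearMap.ext fun y => counitP_C y
        rw [h1]
        have h2 : TensorProduct.map ι (Coalgebra.counit (R := k) (A := A))
              (Coalgebra.comul (R := k) x)
            = TensorProduct.map ι LinearMap.id
              (LinearMap.lTensor A (Coalgebra.counit (R := k)) (Coalgebra.comul (R := k) x)) := by
          have := map_comp_right_apply (R := k) LinearMap.id
            (Coalgebra.counit (R := k) (A := A)) ι (Coalgebra.comul (R := k) x)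
          rw [LinearMap.id_comp] at this
          exact this
        rw [h2, Coalgebra.lTensor_counit_comul]
        rfl
      · intro j
        simp only [AlgHom.comp_apply, Algebra.TensorProduct.includeLeft_apply]
        rw [comulP_X]
        simp only [map_add, map_sum, Algebra.TensorProduct.map_tmul, AlgHom.coe_id, id_eq,
          map_one, counitP_X, counitP_C]
        simp [TensorProduct.tmul_zero]
    refine LinearMap.ext fun x => ?_
    have hx := AlgHom.congr_fun key x
    simp only [AlgHom.comp_apply, Algebra.TensorProduct.includeLeft_apply] at hx
    rw [algMap_apply, AlgHom.toLinearMap_id] at hx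
    exact hx

end SemidirectHopf2

noncomputable section SemidirectHopf3

open MvPolynomial Bialgebra Coalgebra

variable {k : Type} [Field k] {A : Type} [CommRing A] [HopfAlgebra k A] {n : ℕ}

lemma lmul'_map_iota (t : A ⊗[k] A) :
    Algebra.TensorProduct.lmul' k
        (TensorProduct.map (iotaA k A n).toLinearMap (iotaA k A n).toLinearMap t)
      = (iotaA k A n).toLinearMap (LinearMap.mul' k A t) := by
  have key : (Algebra.TensorProduct.lmul' k (S := MvPolynomial (Fin n) A)).toLinearMap ∘ₗ
        TensorProduct.map (iotaA k A n).toLinearMap (iotaA k A n).toLinearMap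
      = (iotaA k A n).toLinearMap ∘ₗ LinearMap.mul' k A :=
    TensorProduct.ext' fun a b => by
      simp [Algebra.TensorProduct.lmul'_apply_tmul, LinearMap.mul'_apply]
  exact LinearMap.congr_fun key t

lemma lmul'_eq_mul' {S : Type} [CommRing S] [Algebra k S] (t : S ⊗[k] S) :
    Algebra.TensorProduct.lmul' k t = LinearMap.mul' k S t := by
  have key : (Algebra.TensorProduct.lmul' k (S := S)).toLinearMap = LinearMap.mul' k S :=
    TensorProduct.ext' fun a b => by
      simp [Algebra.TensorProduct.lmul'_apply_tmul, LinearMap.mul'_apply]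
  exact LinearMap.congr_fun key t

/-- The bialgebra structure. -/
noncomputable def bialgebraP (m : Fin n → Fin n → A)
    (hm1 : ∀ j i, Coalgebra.comul (R := k) (m j i) = ∑ l, m j l ⊗ₜ[k] m l i)
    (hm2 : ∀ j i, Coalgebra.counit (R := k) (m j i) = if j = i then (1:k) else 0) :
    Bialgebra k (MvPolynomial (Fin n) A) :=
  letI := coalgebraP m hm1 hm2
  Bialgebra.mk' k (MvPolynomial (Fin n) A)
    (map_one counitP) (fun {a b} => map_mul counitP a b)
    (map_one (comulP m)) (fun {a b} => map_mul (comulP m) a b)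

/-- The Hopf algebra structure. -/
noncomputable def hopfP (m : Fin n → Fin n → A)
    (hm1 : ∀ j i, Coalgebra.comul (R := k) (m j i) = ∑ l, m j l ⊗ₜ[k] m l i)
    (hm2 : ∀ j i, Coalgebra.counit (R := k) (m j i) = if j = i then (1:k) else 0) :
    HopfAlgebra k (MvPolynomial (Fin n) A) :=
  { bialgebraP m hm1 hm2 with
    antipode := (antipodeP m).toLinearMap
    mul_antipode_rTensor_comul := by
      have key : (Algebra.TensorProduct.lmul' k).comp
            ((Algebra.TensorProduct.map (antipodeP (k := k) m)
              (AlgHom.id k (MvPolynomial (Fin n) A))).comp (comulP (k := k) m))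
          = (Algebra.ofId k (MvPolynomial (Fin n) A)).comp counitP := by
        apply algHom_extP
        · intro x
          simp only [AlgHom.comp_apply]
          rw [comulP_C, algMap_apply, map_map_apply, AlgHom.toLinearMap_id, LinearMap.id_comp]
          have hS : (antipodeP (k := k) m).toLinearMap ∘ₗ (iotaA k A n).toLinearMap
              = (iotaA k A n).toLinearMap ∘ₗ HopfAlgebra.antipode (R := k) :=
            LinearMap.ext fun y => antipodeP_C m y
          rw [hS]
          have h2 : TensorProduct.map
                ((iotaA k A n).toLinearMap ∘ₗ HopfAlgebra.antipode (R := k))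
                (iotaA k A n).toLinearMap (Coalgebra.comul (R := k) x)
              = TensorProduct.map (iotaA k A n).toLinearMap (iotaA k A n).toLinearMap
                (LinearMap.rTensor A (HopfAlgebra.antipode (R := k))
                  (Coalgebra.comul (R := k) x)) :=
            map_comp_left_apply _ _ _ _
          rw [h2, lmul'_map_iota, HopfAlgebra.mul_antipode_rTensor_comul_apply]
          simp only [iotaA_toLin_apply, counitP_C]
          rw [Algebra.ofId_apply]
          have : (MvPolynomial.C : A →+* MvPolynomial (Fin n) A) (algebraMap k A
              (Coalgebra.counit (R := k) x)) = algebraMap k (MvPolynomial (Fin n) A)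
              (Coalgebra.counit (R := k) x) := by
            rw [IsScalarTower.algebraMap_apply k A (MvPolynomial (Fin n) A)]
            rfl
          exact this
        · intro j
          simp only [AlgHom.comp_apply]
          rw [comulP_X]
          simp only [map_add, map_sum, Algebra.TensorProduct.map_tmul, AlgHom.coe_id, id_eq,
            antipodeP_X, antipodeP_C, map_one, Algebra.TensorProduct.lmul'_apply_tmul,
            counitP_X, mul_one]
          rw [Algebra.ofId_apply]
          simp [neg_mul, Finset.sum_neg_distrib]
      refine LinearMap.ext fun x => ?_
      have hx := AlgHom.congr_fun key x
      simp only [AlgHom.comp_apply] at hx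
      rw [algMap_apply, AlgHom.toLinearMap_id, lmul'_eq_mul', Algebra.ofId_apply] at hx
      exact hx
    mul_antipode_lTensor_comul := by
      have hms : ∀ j l, (∑ i, m j i * HopfAlgebra.antipode (R := k) (m i l))
          = algebraMap k A (if j = l then (1:k) else 0) := by
        intro j l
        have h := HopfAlgebra.mul_antipode_lTensor_comul_apply (R := k) (m j l)
        rw [hm1 j l] at h
        simp only [map_sum, LinearMap.lTensor_tmul, LinearMap.mul'_apply] at h
        rw [h, hm2 j l]
      have key : (Algebra.TensorProduct.lmul' k).comp
            ((Algebra.TensorProduct.map (AlgHom.id k (MvPolynomial (Fin n) A))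
              (antipodeP (k := k) m)).comp (comulP (k := k) m))
          = (Algebra.ofId k (MvPolynomial (Fin n) A)).comp counitP := by
        apply algHom_extP
        · intro x
          simp only [AlgHom.comp_apply]
          rw [comulP_C, algMap_apply, map_map_apply, AlgHom.toLinearMap_id, LinearMap.id_comp]
          have hS : (antipodeP (k := k) m).toLinearMap ∘ₗ (iotaA k A n).toLinearMap
              = (iotaA k A n).toLinearMap ∘ₗ HopfAlgebra.antipode (R := k) :=
            LinearMap.ext fun y => antipodeP_C m y
          rw [hS]
          have h2 : TensorProduct.map (iotaA k A n).toLinearMap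
                ((iotaA k A n).toLinearMap ∘ₗ HopfAlgebra.antipode (R := k))
                (Coalgebra.comul (R := k) x)
              = TensorProduct.map (iotaA k A n).toLinearMap (iotaA k A n).toLinearMap
                (LinearMap.lTensor A (HopfAlgebra.antipode (R := k))
                  (Coalgebra.comul (R := k) x)) :=
            map_comp_right_apply _ _ _ _
          rw [h2, lmul'_map_iota, HopfAlgebra.mul_antipode_lTensor_comul_apply]
          simp only [iotaA_toLin_apply, counitP_C]
          rw [Algebra.ofId_apply]
          have : (MvPolynomial.C : A →+* MvPolynomial (Fin n) A) (algebraMap k A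
              (Coalgebra.counit (R := k) x)) = algebraMap k (MvPolynomial (Fin n) A)
              (Coalgebra.counit (R := k) x) := by
            rw [IsScalarTower.algebraMap_apply k A (MvPolynomial (Fin n) A)]
            rfl
          exact this
        · intro j
          simp only [AlgHom.comp_apply]
          rw [comulP_X]
          simp only [map_add, map_sum, Algebra.TensorProduct.map_tmul, AlgHom.coe_id, id_eq,
            antipodeP_X, map_one, Algebra.TensorProduct.lmul'_apply_tmul, counitP_X, mul_one]
          rw [Algebra.ofId_apply, map_zero]
          -- goal : X j * 1? + ∑ i, C (m j i) * (-∑ l, C (antipode (m i l)) * X l) = 0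
          have hsplit : ∀ i : Fin n,
              (MvPolynomial.C (m j i) : MvPolynomial (Fin n) A) *
                (-∑ l, MvPolynomial.C (HopfAlgebra.antipode (R := k) (m i l)) * MvPolynomial.X l)
              = -∑ l, MvPolynomial.C (m j i * HopfAlgebra.antipode (R := k) (m i l))
                  * MvPolynomial.X l := by
            intro i
            rw [mul_neg, Finset.mul_sum]
            congr 1
            refine Finset.sum_congr rfl fun l _ => ?_
            rw [← mul_assoc, ← MvPolynomial.C_mul]
          rw [Finset.sum_congr rfl fun i _ => hsplit i]
          rw [Finset.sum_neg_distrib, Finset.sum_comm]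
          have hinner : ∀ l : Fin n,
              (∑ i, MvPolynomial.C (m j i * HopfAlgebra.antipode (R := k) (m i l))
                  * MvPolynomial.X l)
              = MvPolynomial.C (algebraMap k A (if j = l then (1:k) else 0)) *
                  MvPolynomial.X l := by
            intro l
            rw [← Finset.sum_mul, ← map_sum MvPolynomial.C, hms j l]
          rw [Finset.sum_congr rfl fun l _ => hinner l]
          simp only [apply_ite (algebraMap k A), apply_ite (MvPolynomial.C (σ := Fin n)),
            map_one, map_zero, MvPolynomial.C_0, MvPolynomial.C_1,
            ite_mul, one_mul, zero_mul, Finset.sum_ite_eq, Finset.mem_univ, if_true]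
          ring
      refine LinearMap.ext fun x => ?_
      have hx := AlgHom.congr_fun key x
      simp only [AlgHom.comp_apply] at hx
      rw [algMap_apply, AlgHom.toLinearMap_id, lmul'_eq_mul', Algebra.ofId_apply] at hx
      exact hx }

end SemidirectHopf3

noncomputable section BialgHomP

open MvPolynomial Bialgebra Coalgebra

variable {k : Type} [Field k] {A : Type} [CommRing A] [HopfAlgebra k A] {n : ℕ}

lemma finiteTypeP (h : Algebra.FiniteType k A) :
    Algebra.FiniteType k (MvPolynomial (Fin n) A) :=
  Algebra.FiniteType.trans h (inferInstance : Algebra.FiniteType A (MvPolynomial (Fin n) A))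

/-- morphisms to `A` as bialgebra maps -/
noncomputable def bialgHomP (m : Fin n → Fin n → A)
    (hm1 : ∀ j i, Coalgebra.comul (R := k) (m j i) = ∑ l, m j l ⊗ₜ[k] m l i)
    (hm2 : ∀ j i, Coalgebra.counit (R := k) (m j i) = if j = i then (1:k) else 0)
    (t : Fin n → A)
    (ht1 : ∀ j, Coalgebra.comul (R := k) (t j) = t j ⊗ₜ[k] 1 + ∑ i, m j i ⊗ₜ[k] t i)
    (ht2 : ∀ j, Coalgebra.counit (R := k) (t j) = 0) :
    @BialgHom k (MvPolynomial (Fin n) A) A _ _ _ _ _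
      (coalgebraP m hm1 hm2).toCoalgebraStruct _ := by
  letI : Coalgebra k (MvPolynomial (Fin n) A) := coalgebraP m hm1 hm2
  have hcounit : (counitAlgHom k A).comp (liftP (AlgHom.id k A) t) = counitP := by
    apply algHom_extP
    · intro x
      simp only [AlgHom.comp_apply, liftP_C, AlgHom.coe_id, id_eq, counitAlgHom_apply,
        counitP_C]
    · intro j
      simp only [AlgHom.comp_apply, liftP_X, counitAlgHom_apply, counitP_X]
      exact ht2 j
  have hcomul : (Algebra.TensorProduct.map (liftP (AlgHom.id k A) t)
        (liftP (AlgHom.id k A) t)).comp (comulP (k := k) m)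
      = (comulAlgHom k A).comp (liftP (AlgHom.id k A) t) := by
    apply algHom_extP
    · intro x
      simp only [AlgHom.comp_apply, comulP_C, liftP_C, AlgHom.coe_id, id_eq,
        comulAlgHom_apply]
      rw [algMap_apply, map_map_apply]
      have hfι : (liftP (AlgHom.id k A) t).toLinearMap ∘ₗ (iotaA k A n).toLinearMap
          = LinearMap.id := LinearMap.ext fun y => by
        simp [AlgHom.toLinearMap_apply]
      rw [hfι, TensorProduct.map_id]
      rfl
    · intro j
      simp only [AlgHom.comp_apply, comulP_X, liftP_X, comulAlgHom_apply]
      rw [map_add, map_sum, Algebra.TensorProduct.map_tmul, map_one, liftP_X, ht1 j]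
      congr 1
      refine Finset.sum_congr rfl fun i _ => ?_
      rw [Algebra.TensorProduct.map_tmul, liftP_C, liftP_X]
      rfl
  refine
    { toLinearMap := (liftP (AlgHom.id k A) t).toLinearMap
      counit_comp := ?_
      map_comp_comul := ?_
      map_one' := map_one (liftP (AlgHom.id k A) t)
      map_mul' := map_mul (liftP (AlgHom.id k A) t) }
  · refine LinearMap.ext fun x => ?_
    exact AlgHom.congr_fun hcounit x
  · refine LinearMap.ext fun x => ?_
    have hx := AlgHom.congr_fun hcomul x
    simp only [AlgHom.comp_apply] at hx
    rw [algMap_apply] at hx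
    exact hx

lemma bialgHomP_apply_X (m : Fin n → Fin n → A)
    (hm1 : ∀ j i, Coalgebra.comul (R := k) (m j i) = ∑ l, m j l ⊗ₜ[k] m l i)
    (hm2 : ∀ j i, Coalgebra.counit (R := k) (m j i) = if j = i then (1:k) else 0)
    (t : Fin n → A) (ht1) (ht2) (j : Fin n) :
    bialgHomP m hm1 hm2 t ht1 ht2 (MvPolynomial.X j) = t j := by
  show liftP (AlgHom.id k A) t (MvPolynomial.X j) = t j
  simp

lemma bialgHomP_apply_C (m : Fin n → Fin n → A)
    (hm1 : ∀ j i, Coalgebra.comul (R := k) (m j i) = ∑ l, m j l ⊗ₜ[k] m l i)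
    (hm2 : ∀ j i, Coalgebra.counit (R := k) (m j i) = if j = i then (1:k) else 0)
    (t : Fin n → A) (ht1) (ht2) (x : A) :
    bialgHomP m hm1 hm2 t ht1 ht2 (MvPolynomial.C x) = x := by
  show liftP (AlgHom.id k A) t (MvPolynomial.C x) = x
  simp

end BialgHomP

end Aux

open Coalgebra MvPolynomial

/-- If `H` is affine epimorphic in the affine algebraic group `G`, then `O(G/H) = k`:
the right `H`-invariants of `O(G)` are exactly the constants. -/
theorem affineEpimorphic_implies_only_constant_invariants
    (k A B : Type) [Field k] [CommRing A] [HopfAlgebra k A] [CommRing B]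
    [HopfAlgebra k B] (hA : Algebra.FiniteType k A) (hB : Algebra.FiniteType k B)
    (π : A →ₐc[k] B) (hπ : Function.Surjective π)
    (hepi : IsAffineEpimorphic k A B π) :
    rightInvariants k A B π = Set.range (algebraMap k A) := by
  classical
  ext a
  simp only [rightInvariants, Set.mem_setOf_eq, Set.mem_range]
  constructor
  · intro ha
    obtain ⟨n, e, α, m, hae, hcom, hind⟩ := exists_comodule_data (k := k) a
    -- the comatrix identity
    have hm1 : ∀ j i, Coalgebra.comul (R := k) (m j i) = ∑ l, m j l ⊗ₜ[k] m l i := by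
      intro j i
      have h0 := Coalgebra.coassoc_apply (R := k) (e i)
      rw [hcom i, map_sum, map_sum, map_sum] at h0
      have hL : ∀ l : Fin n, (TensorProduct.assoc k A A A)
          (LinearMap.rTensor A (Coalgebra.comul (R := k)) (e l ⊗ₜ[k] m l i))
          = ∑ c : Fin n, e c ⊗ₜ[k] (m c l ⊗ₜ[k] m l i) := by
        intro l
        rw [LinearMap.rTensor_tmul, hcom l, TensorProduct.sum_tmul, map_sum]
        exact Finset.sum_congr rfl fun c _ => by rw [TensorProduct.assoc_tmul]
      rw [Finset.sum_congr rfl fun l _ => hL l, Finset.sum_comm] at h0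
      have hR : ∀ l : Fin n, LinearMap.lTensor A (Coalgebra.comul (R := k)) (e l ⊗ₜ[k] m l i)
          = e l ⊗ₜ[k] Coalgebra.comul (R := k) (m l i) := fun l => rfl
      rw [Finset.sum_congr rfl fun l _ => hR l] at h0
      have h1 : ∀ c : Fin n, (∑ l : Fin n, e c ⊗ₜ[k] (m c l ⊗ₜ[k] m l i))
          = e c ⊗ₜ[k] (∑ l : Fin n, m c l ⊗ₜ[k] m l i) := fun c =>
        (TensorProduct.tmul_sum _ _ _).symm
      rw [Finset.sum_congr rfl fun c _ => h1 c] at h0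
      have := hind (A ⊗[k] A) inferInstance inferInstance
        (fun c => ∑ l : Fin n, m c l ⊗ₜ[k] m l i)
        (fun c => Coalgebra.comul (R := k) (m c i)) h0
      exact (congrFun this j).symm
    -- counit of the matrix coefficients
    have hm2 : ∀ j i, Coalgebra.counit (R := k) (m j i) = if j = i then (1:k) else 0 := by
      intro j i
      have h0 := Coalgebra.lTensor_counit_comul (R := k) (e i)
      rw [hcom i, map_sum] at h0
      have h1 : ∀ l : Fin n, LinearMap.lTensor A (Coalgebra.counit (R := k)) (e l ⊗ₜ[k] m l i)
          = e l ⊗ₜ[k] Coalgebra.counit (R := k) (m l i) := fun l => rfl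
      rw [Finset.sum_congr rfl fun l _ => h1 l] at h0
      have h2 : e i ⊗ₜ[k] (1 : k) = ∑ l : Fin n, e l ⊗ₜ[k] (if l = i then (1:k) else 0) := by
        rw [Finset.sum_congr rfl fun l _ => TensorProduct.tmul_ite _ _ _]
        rw [Finset.sum_ite_eq' Finset.univ i (fun l => e l ⊗ₜ[k] (1:k))]
        simp
      rw [h2] at h0
      have := hind k inferInstance inferInstance
        (fun l => Coalgebra.counit (R := k) (m l i))
        (fun l => if l = i then (1:k) else 0) h0
      exact congrFun this j
    -- the invariance condition in coordinates
    have hP5 : ∀ j, (∑ i, α i • π (m j i)) = α j • (1:B) := by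
      have h0 : LinearMap.lTensor A (π : A →ₗ[k] B) (Coalgebra.comul (R := k) a)
          = ∑ j, e j ⊗ₜ[k] (∑ i, α i • π (m j i)) := by
        conv_lhs => rw [hae]
        rw [map_sum, map_sum]
        have h1 : ∀ i, LinearMap.lTensor A (π : A →ₗ[k] B)
            (Coalgebra.comul (R := k) (α i • e i))
            = ∑ j, α i • (e j ⊗ₜ[k] π (m j i)) := by
          intro i
          rw [map_smul, hcom i, map_smul, map_sum, Finset.smul_sum]
          simp [LinearMap.lTensor_tmul]
        rw [Finset.sum_congr rfl fun i _ => h1 i, Finset.sum_comm]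
        refine Finset.sum_congr rfl fun j _ => ?_
        rw [TensorProduct.tmul_sum]
        refine Finset.sum_congr rfl fun i _ => ?_
        rw [TensorProduct.tmul_smul]
      have h2 : a ⊗ₜ[k] (1:B) = ∑ j, e j ⊗ₜ[k] (α j • (1:B)) := by
        conv_lhs => rw [hae]
        rw [TensorProduct.sum_tmul]
        exact Finset.sum_congr rfl fun j _ => by
          rw [TensorProduct.smul_tmul]
      rw [h0, h2] at ha
      have := hind B inferInstance inferInstance
        (fun j => ∑ i, α i • π (m j i)) (fun j => α j • (1:B)) ha
      exact fun j => congrFun this j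
    -- the twisted morphism data
    set t2 : Fin n → A := fun j => α j • 1 - ∑ i, α i • m j i with ht2def
    have ht1_2 : ∀ j, Coalgebra.comul (R := k) (t2 j)
        = t2 j ⊗ₜ[k] 1 + ∑ i, m j i ⊗ₜ[k] t2 i := by
      intro j
      rw [ht2def]
      simp only [map_sub, map_smul, map_sum, Bialgebra.comul_one, hm1]
      rw [Algebra.TensorProduct.one_def]
      -- RHS normalization
      have hR : ((α j • (1:A) - ∑ i, α i • m j i) ⊗ₜ[k] (1:A)
            + ∑ i, m j i ⊗ₜ[k] (α i • (1:A) - ∑ l, α l • m i l))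
          = α j • ((1:A) ⊗ₜ[k] (1:A))
            - ∑ i, ∑ l, α l • (m j i ⊗ₜ[k] m i l) := by
        rw [TensorProduct.sub_tmul, TensorProduct.smul_tmul']
        have h3 : ∀ i : Fin n, m j i ⊗ₜ[k] (α i • (1:A) - ∑ l, α l • m i l)
            = α i • (m j i ⊗ₜ[k] (1:A)) - ∑ l, α l • (m j i ⊗ₜ[k] m i l) := by
          intro i
          rw [TensorProduct.tmul_sub, TensorProduct.tmul_smul, TensorProduct.tmul_sum]
          congr 1
          exact Finset.sum_congr rfl fun l _ => (TensorProduct.tmul_smul _ _ _)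
        rw [Finset.sum_congr rfl fun i _ => h3 i, Finset.sum_sub_distrib]
        have h4 : (∑ i, α i • m j i) ⊗ₜ[k] (1:A) = ∑ i, α i • (m j i ⊗ₜ[k] (1:A)) := by
          rw [TensorProduct.sum_tmul]
          exact Finset.sum_congr rfl fun i _ => TensorProduct.smul_tmul' _ _ _
        rw [h4]
        abel
      rw [hR]
      -- LHS normalization
      have hL : (α j • ((1:A) ⊗ₜ[k] (1:A)) - ∑ i, α i • ∑ l, m j l ⊗ₜ[k] m l i)
          = α j • ((1:A) ⊗ₜ[k] (1:A)) - ∑ i, ∑ l, α l • (m j i ⊗ₜ[k] m i l) := by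
        congr 1
        rw [Finset.sum_congr rfl fun i _ => Finset.smul_sum]
        rw [Finset.sum_comm]
      exact hL
    have ht2_2 : ∀ j, Coalgebra.counit (R := k) (t2 j) = 0 := by
      intro j
      rw [ht2def]
      simp only [map_sub, map_smul, map_sum, Bialgebra.counit_one, hm2, smul_eq_mul, mul_one]
      rw [Finset.sum_congr rfl (fun i _ => by rw [mul_ite, mul_one, mul_zero])]
      rw [Finset.sum_ite_eq Finset.univ j α]
      simp
    have h0t1 : ∀ j, Coalgebra.comul (R := k) ((0 : Fin n → A) j)
        = (0 : Fin n → A) j ⊗ₜ[k] 1 + ∑ i, m j i ⊗ₜ[k] (0 : Fin n → A) i := by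
      intro j
      simp
    have h0t2 : ∀ j, Coalgebra.counit (R := k) ((0 : Fin n → A) j) = 0 := by
      intro j
      simp
    letI hopf : HopfAlgebra k (MvPolynomial (Fin n) A) := hopfP m hm1 hm2
    set φ₁ := bialgHomP m hm1 hm2 0 h0t1 h0t2 with hφ₁
    set φ₂ := bialgHomP m hm1 hm2 t2 ht1_2 ht2_2 with hφ₂
    have hAH : ((π : A →ₐ[k] B)).comp (φ₁ : MvPolynomial (Fin n) A →ₐ[k] A)
        = ((π : A →ₐ[k] B)).comp (φ₂ : MvPolynomial (Fin n) A →ₐ[k] A) := by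
      apply algHom_extP
      · intro x
        simp only [AlgHom.comp_apply]
        have e1 : (φ₁ : MvPolynomial (Fin n) A →ₐ[k] A) (MvPolynomial.C x) = x :=
          bialgHomP_apply_C m hm1 hm2 0 h0t1 h0t2 x
        have e2 : (φ₂ : MvPolynomial (Fin n) A →ₐ[k] A) (MvPolynomial.C x) = x :=
          bialgHomP_apply_C m hm1 hm2 t2 ht1_2 ht2_2 x
        rw [e1, e2]
      · intro j
        simp only [AlgHom.comp_apply]
        have e1 : (φ₁ : MvPolynomial (Fin n) A →ₐ[k] A) (MvPolynomial.X j)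
            = (0 : Fin n → A) j := bialgHomP_apply_X m hm1 hm2 0 h0t1 h0t2 j
        have e2 : (φ₂ : MvPolynomial (Fin n) A →ₐ[k] A) (MvPolynomial.X j) = t2 j :=
          bialgHomP_apply_X m hm1 hm2 t2 ht1_2 ht2_2 j
        rw [e1, e2]
        have hπt2 : (π : A →ₐ[k] B) (t2 j) = 0 := by
          show (π : A →ₐ[k] B) (α j • 1 - ∑ i, α i • m j i) = 0
          rw [map_sub, map_smul, map_one, map_sum]
          have hterm : ∀ i, (π : A →ₐ[k] B) (α i • m j i) = α i • π (m j i) := by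
            intro i
            rw [map_smul]
            rfl
          rw [Finset.sum_congr rfl fun i _ => hterm i, hP5 j]
          simp
        rw [hπt2]
        show (π : A →ₐ[k] B) ((0 : Fin n → A) j) = 0
        simp
    letI : Coalgebra k (MvPolynomial (Fin n) A) := coalgebraP m hm1 hm2
    have hcomp : π.comp φ₁ = π.comp φ₂ := by
      apply BialgHom.ext
      intro x
      have := AlgHom.congr_fun hAH x
      simpa using this
    have hφeq : φ₁ = φ₂ := hepi (MvPolynomial (Fin n) A) inferInstance hopf
      (finiteTypeP hA) φ₁ φ₂ hcomp
    have ht2zero : ∀ j, t2 j = 0 := by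
      intro j
      have := DFunLike.congr_fun hφeq (MvPolynomial.X j)
      rw [hφ₁, hφ₂, bialgHomP_apply_X, bialgHomP_apply_X] at this
      exact this.symm
    have hsum : ∀ j, (∑ i, α i • m j i) = α j • (1:A) := by
      intro j
      have := ht2zero j
      rw [ht2def] at this
      have := sub_eq_zero.mp this
      exact this.symm
    have hΔa : Coalgebra.comul (R := k) a = a ⊗ₜ[k] 1 := by
      conv_lhs => rw [hae]
      rw [map_sum]
      have h1 : ∀ i, Coalgebra.comul (R := k) (α i • e i)
          = ∑ j, α i • (e j ⊗ₜ[k] m j i) := by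
        intro i
        rw [map_smul, hcom i, Finset.smul_sum]
      rw [Finset.sum_congr rfl fun i _ => h1 i, Finset.sum_comm]
      have h2 : ∀ j, (∑ i, α i • (e j ⊗ₜ[k] m j i)) = (α j • e j) ⊗ₜ[k] (1:A) := by
        intro j
        have h3 : ∀ i, α i • (e j ⊗ₜ[k] m j i) = e j ⊗ₜ[k] (α i • m j i) := fun i =>
          (TensorProduct.tmul_smul _ _ _).symm
        rw [Finset.sum_congr rfl fun i _ => h3 i, ← TensorProduct.tmul_sum, hsum j,
          TensorProduct.tmul_smul, TensorProduct.smul_tmul']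
      rw [Finset.sum_congr rfl fun j _ => h2 j, ← TensorProduct.sum_tmul, ← hae]
    refine ⟨Coalgebra.counit (R := k) a, ?_⟩
    have h := Coalgebra.rTensor_counit_comul (R := k) a
    rw [hΔa, LinearMap.rTensor_tmul] at h
    have h2 := congrArg (TensorProduct.lid k A) h
    rw [TensorProduct.lid_tmul, TensorProduct.lid_tmul, one_smul] at h2
    rw [Algebra.algebraMap_eq_smul_one]
    exact h2
  · rintro ⟨c, rfl⟩
    rw [Bialgebra.comul_algebraMap]
    have h1 : algebraMap k (A ⊗[k] A) c = (algebraMap k A c) ⊗ₜ[k] (1:A) := by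
      rw [Algebra.algebraMap_eq_smul_one, Algebra.TensorProduct.one_def,
        TensorProduct.smul_tmul', ← Algebra.algebraMap_eq_smul_one]
    rw [h1, LinearMap.lTensor_tmul]
    congr 1
    exact map_one π
end

section
/- Let H be an algebraic subgroup of an affine algebraic group G over a field k with O(G/H) = k. Then for every finite-dimensional G-module V, the fixed-point subspace V^H equals V^G. -/
open TensorProduct

section Aux

variable {k V : Type} [Field k] [AddCommGroup V] [Module k V]

/-- The `i`-th coordinate map `V ⊗ M → M` associated to a basis of `V`. -/
noncomputable def coordT {ι : Type} (b : Module.Basis ι k V) (i : ι)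
    {M : Type} [AddCommGroup M] [Module k M] : V ⊗[k] M →ₗ[k] M :=
  (TensorProduct.lid k M).toLinearMap ∘ₗ LinearMap.rTensor M (b.coord i)

@[simp] lemma coordT_tmul {ι : Type} (b : Module.Basis ι k V) (i : ι)
    {M : Type} [AddCommGroup M] [Module k M] (v : V) (m : M) :
    coordT b i (v ⊗ₜ[k] m) = b.coord i v • m := by
  simp [coordT]

lemma coordT_lTensor {ι : Type} (b : Module.Basis ι k V) (i : ι)
    {M N : Type} [AddCommGroup M] [Module k M] [AddCommGroup N] [Module k N]
    (g : M →ₗ[k] N) (x : V ⊗[k] M) :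
    coordT b i (LinearMap.lTensor V g x) = g (coordT b i x) := by
  have h : (coordT b i (M := N)) ∘ₗ LinearMap.lTensor V g = g ∘ₗ coordT b i := by
    apply TensorProduct.ext'
    intro v m
    simp
  exact LinearMap.congr_fun h x

lemma coordT_assoc {ι : Type} (b : Module.Basis ι k V) (i : ι)
    {M N : Type} [AddCommGroup M] [Module k M] [AddCommGroup N] [Module k N]
    (y : V ⊗[k] M) (c : N) :
    coordT b i ((TensorProduct.assoc k V M N) (y ⊗ₜ[k] c)) = coordT b i y ⊗ₜ[k] c := by
  induction y using TensorProduct.induction_on with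
  | zero => simp
  | tmul v m => simp [TensorProduct.smul_tmul']
  | add a b' ha hb => simp [TensorProduct.add_tmul, ha, hb]

lemma coordT_sum {ι : Type} [Fintype ι] (b : Module.Basis ι k V)
    {M : Type} [AddCommGroup M] [Module k M] (x : V ⊗[k] M) :
    ∑ i, b i ⊗ₜ[k] coordT b i x = x := by
  have h : (∑ i, (TensorProduct.mk k V M (b i)) ∘ₗ (coordT b i)) = LinearMap.id := by
    apply TensorProduct.ext'
    intro v m
    simp only [LinearMap.sum_apply, LinearMap.comp_apply, coordT_tmul,
      TensorProduct.mk_apply, LinearMap.id_apply]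
    calc ∑ i, b i ⊗ₜ[k] (b.coord i v • m)
        = ∑ i, (b.coord i v • b i) ⊗ₜ[k] m := by
          refine Finset.sum_congr rfl fun i _ => ?_
          rw [TensorProduct.smul_tmul]
      _ = (∑ i, b.coord i v • b i) ⊗ₜ[k] m := by rw [TensorProduct.sum_tmul]
      _ = v ⊗ₜ[k] m := by
          congr 1
          simpa [Module.Basis.coord_apply] using b.sum_repr v
  have := LinearMap.congr_fun h x
  simpa using this

end Aux

/-- If `O(G/H) = k`, then for every finite-dimensional `G`-module `V` one has
`V^H = V^G`. -/
theorem fixedPoints_eq_of_only_constant_invariants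
    (k A B : Type) [Field k] [CommRing A] [HopfAlgebra k A] [CommRing B]
    [HopfAlgebra k B] (hA : Algebra.FiniteType k A) (hB : Algebra.FiniteType k B)
    (π : A →ₐc[k] B) (hπ : Function.Surjective π)
    (hconst : rightInvariants k A B π = Set.range (algebraMap k A)) :
    ∀ (V : Type) (_ : AddCommGroup V) (_ : Module k V) (_ : FiniteDimensional k V)
      (r : RationalRep k A V),
      r.fixedPointsUnder π = r.fixedPoints := by
  intro V _ _ _ r
  ext v
  simp only [RationalRep.fixedPointsUnder, RationalRep.fixedPoints, Set.mem_setOf_eq]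
  constructor
  · intro hv
    classical
    let b := Module.finBasis k V
    have hco := LinearMap.congr_fun r.coassoc v
    simp only [LinearMap.comp_apply] at hco
    have key : ∀ i, LinearMap.lTensor A (π : A →ₗ[k] B)
        (Coalgebra.comul (R := k) (coordT b i (r.ρ v))) = coordT b i (r.ρ v) ⊗ₜ[k] (1 : B) := by
      intro i
      have h1 : coordT b i (LinearMap.lTensor V
            ((LinearMap.lTensor A (π : A →ₗ[k] B)) ∘ₗ (Coalgebra.comul (R := k)))
            (r.ρ v)) = LinearMap.lTensor A (π : A →ₗ[k] B)
              (Coalgebra.comul (R := k) (coordT b i (r.ρ v))) := by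
        rw [coordT_lTensor]; rfl
      have h2 : LinearMap.lTensor V
            ((LinearMap.lTensor A (π : A →ₗ[k] B)) ∘ₗ (Coalgebra.comul (R := k))) (r.ρ v)
          = LinearMap.lTensor V (LinearMap.lTensor A (π : A →ₗ[k] B))
              (LinearMap.lTensor V (Coalgebra.comul (R := k)) (r.ρ v)) := by
        rw [LinearMap.lTensor_comp, LinearMap.comp_apply]
      have h3 : LinearMap.lTensor V (LinearMap.lTensor A (π : A →ₗ[k] B))
            (LinearMap.lTensor V (Coalgebra.comul (R := k)) (r.ρ v))
          = (TensorProduct.assoc k V A B) (r.ρ v ⊗ₜ[k] (1 : B)) := by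
        rw [← hco]
        have hcomm : (LinearMap.lTensor V (LinearMap.lTensor A (π : A →ₗ[k] B))) ∘ₗ
              (TensorProduct.assoc k V A A).toLinearMap
            = (TensorProduct.assoc k V A B).toLinearMap ∘ₗ
              (LinearMap.lTensor (V ⊗[k] A) (π : A →ₗ[k] B)) := by
          apply TensorProduct.ext_threefold
          intro u a a'
          simp
        have hthis := LinearMap.congr_fun hcomm (LinearMap.rTensor A r.ρ (r.ρ v))
        simp only [LinearMap.comp_apply] at hthis
        rw [hthis]
        refine congrArg _ ?_
        have h4 : (LinearMap.lTensor (V ⊗[k] A) (π : A →ₗ[k] B)) ∘ₗ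
              (LinearMap.rTensor A r.ρ)
            = (LinearMap.rTensor B r.ρ) ∘ₗ (LinearMap.lTensor V (π : A →ₗ[k] B)) := by
          rw [LinearMap.lTensor_comp_rTensor, LinearMap.rTensor_comp_lTensor]
        have h5 := LinearMap.congr_fun h4 (r.ρ v)
        simp only [LinearMap.comp_apply] at h5
        rw [h5, hv, LinearMap.rTensor_tmul]
      rw [h1.symm, h2, h3, coordT_assoc]
    have hconst' : ∀ i, ∃ c : k, algebraMap k A c = coordT b i (r.ρ v) := by
      intro i
      have hmem : coordT b i (r.ρ v) ∈ rightInvariants k A B π := key i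
      rw [hconst] at hmem
      exact hmem
    choose c hc using hconst'
    have hxw : r.ρ v = (∑ i, c i • b i) ⊗ₜ[k] (1 : A) := by
      conv_lhs => rw [← coordT_sum b (r.ρ v)]
      rw [TensorProduct.sum_tmul]
      refine Finset.sum_congr rfl fun i _ => ?_
      rw [← hc i, Algebra.algebraMap_eq_smul_one, TensorProduct.smul_tmul]
    have hcu := LinearMap.congr_fun r.counit v
    simp only [LinearMap.comp_apply, LinearMap.id_apply] at hcu
    rw [hxw] at hcu
    simp only [LinearMap.lTensor_tmul, Bialgebra.counit_one,
      TensorProduct.rid_tmul, one_smul, LinearEquiv.coe_coe] at hcu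
    rw [hxw, hcu]
  · intro hv
    rw [hv, LinearMap.lTensor_tmul]
    simp
end

section
/- Let G be an affine algebraic group over a field k and H an algebraic subgroup such that V^H = V^G for every finite-dimensional G-module V. Then for every finite-dimensional G-module V and every direct sum decomposition V = V₁ ⊕ V₂ into H-submodules, both V₁ and V₂ are G-submodules. -/
open TensorProduct

set_option linter.unusedSectionVars false
set_option linter.unusedVariables false
set_option maxHeartbeats 1000000
set_option synthInstance.maxHeartbeats 400000

section Coeff
variable {k : Type} [Field k] {V : Type} [AddCommGroup V] [Module k V]
  {ι : Type} [Fintype ι] [DecidableEq ι] (c : Module.Basis ι k V)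
  {M : Type} [AddCommGroup M] [Module k M]

noncomputable def cT (i : ι) : V ⊗[k] M →ₗ[k] M :=
  (TensorProduct.lid k M).toLinearMap ∘ₗ (LinearMap.rTensor M (c.coord i))

lemma cT_tmul (i : ι) (v : V) (m : M) : cT c i (v ⊗ₜ[k] m) = c.repr v i • m := by
  simp [cT, Module.Basis.coord_apply]

lemma cT_basis_tmul (i j : ι) (m : M) :
    cT c i (c j ⊗ₜ[k] m) = if i = j then m else 0 := by
  simp only [cT_tmul, Module.Basis.repr_self, Finsupp.single_apply, eq_comm (a := j)]
  split <;> simp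

lemma cT_sum (i : ι) (f : ι → M) : cT c i (∑ j, c j ⊗ₜ[k] f j) = f i := by
  simp [map_sum, cT_basis_tmul]

lemma cT_expand (x : V ⊗[k] M) : ∑ i, c i ⊗ₜ[k] cT c i x = x := by
  induction x using TensorProduct.induction_on with
  | zero => simp
  | tmul v m =>
      simp only [cT_tmul]
      calc ∑ i, c i ⊗ₜ[k] (c.repr v i • m) = ∑ i, (c.repr v i • c i) ⊗ₜ[k] m := by
            simp [TensorProduct.smul_tmul]
        _ = v ⊗ₜ[k] m := by rw [← TensorProduct.sum_tmul, Module.Basis.sum_repr]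
  | add x y hx hy => simp only [map_add, TensorProduct.tmul_add,
      Finset.sum_add_distrib, hx, hy]

lemma cT_ext {x y : V ⊗[k] M} (h : ∀ i, cT c i x = cT c i y) : x = y := by
  rw [← cT_expand c x, ← cT_expand c y]; simp [h]

end Coeff

namespace RationalRep
variable {k A V : Type} [Field k] [CommRing A] [HopfAlgebra k A] [AddCommGroup V]
  [Module k V] [FiniteDimensional k V] (r : RationalRep k A V)

local notation "b" => Module.finBasis k V
local notation "n" => Module.finrank k V

/-- matrix of coefficients of the coaction. -/
noncomputable def cmat : Matrix (Fin n) (Fin n) A :=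
  Matrix.of fun i j => cT b i (r.ρ (b j))

lemma rho_basis (j : Fin n) : r.ρ (b j) = ∑ i, b i ⊗ₜ[k] r.cmat i j :=
  (cT_expand b _).symm

lemma comul_cmat (i j : Fin n) :
    Coalgebra.comul (R := k) (r.cmat i j) = ∑ p, r.cmat i p ⊗ₜ[k] r.cmat p j := by
  have h := LinearMap.congr_fun r.coassoc (b j)
  simp only [LinearMap.comp_apply] at h
  have hR : (LinearMap.lTensor V (Coalgebra.comul (R := k))) (r.ρ (b j))
      = ∑ i, b i ⊗ₜ[k] (Coalgebra.comul (R := k) (r.cmat i j)) := by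
    rw [r.rho_basis j, map_sum]; simp [LinearMap.lTensor_tmul]
  have hL : (TensorProduct.assoc k V A A).toLinearMap
        ((LinearMap.rTensor A r.ρ) (r.ρ (b j)))
      = ∑ i, b i ⊗ₜ[k] (∑ p, r.cmat i p ⊗ₜ[k] r.cmat p j) := by
    rw [r.rho_basis j, map_sum, map_sum]
    simp only [LinearMap.rTensor_tmul, LinearEquiv.coe_coe]
    have : ∀ p : Fin n, (TensorProduct.assoc k V A A) ((r.ρ (b p)) ⊗ₜ[k] r.cmat p j)
        = ∑ i, b i ⊗ₜ[k] (r.cmat i p ⊗ₜ[k] r.cmat p j) := by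
      intro p
      rw [r.rho_basis p, TensorProduct.sum_tmul, map_sum]
      simp [TensorProduct.assoc_tmul]
    simp only [this]
    rw [Finset.sum_comm]
    exact Finset.sum_congr rfl fun i _ => (TensorProduct.tmul_sum _ _ _).symm
  rw [hL, hR] at h
  have h2 := congrArg (cT b i) h
  rw [cT_sum, cT_sum] at h2
  exact h2.symm

lemma counit_cmat (i j : Fin n) :
    Coalgebra.counit (R := k) (r.cmat i j) = if i = j then 1 else 0 := by
  have h := LinearMap.congr_fun r.counit (b j)
  simp only [LinearMap.comp_apply, LinearMap.id_apply] at h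
  rw [r.rho_basis j, map_sum, map_sum] at h
  simp only [LinearMap.lTensor_tmul, TensorProduct.rid_tmul] at h
  have := congrArg (fun v => (b).repr v i) h
  simpa [Finsupp.single_apply, eq_comm] using this

/-- the antipode matrix. -/
noncomputable def smat : Matrix (Fin n) (Fin n) A :=
  Matrix.of fun i j => HopfAlgebra.antipode (R := k) (r.cmat i j)

lemma smat_mul_cmat : r.smat * r.cmat = 1 := by
  ext i j
  have h := HopfAlgebra.mul_antipode_rTensor_comul_apply (R := k) (r.cmat i j)
  rw [r.comul_cmat] at h
  simp only [map_sum, LinearMap.rTensor_tmul, LinearMap.mul'_apply] at h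
  rw [Matrix.mul_apply, Matrix.one_apply]
  calc ∑ p, r.smat i p * r.cmat p j
      = ∑ p, HopfAlgebra.antipode (R := k) (r.cmat i p) * r.cmat p j := rfl
    _ = (if i = j then 1 else 0) := by
        rw [h, r.counit_cmat]
        split <;> simp

lemma cmat_mul_smat : r.cmat * r.smat = 1 := by
  ext i j
  have h := HopfAlgebra.mul_antipode_lTensor_comul_apply (R := k) (r.cmat i j)
  rw [r.comul_cmat] at h
  simp only [map_sum, LinearMap.lTensor_tmul, LinearMap.mul'_apply] at h
  rw [Matrix.mul_apply, Matrix.one_apply]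
  calc ∑ p, r.cmat i p * r.smat p j
      = ∑ p, r.cmat i p * HopfAlgebra.antipode (R := k) (r.cmat p j) := rfl
    _ = (if i = j then 1 else 0) := by
        rw [h, r.counit_cmat]
        split <;> simp

lemma counit_smat (i j : Fin n) :
    Coalgebra.counit (R := k) (r.smat i j) = if i = j then 1 else 0 := by
  have h := congrArg (Matrix.map · (Bialgebra.counitAlgHom k A).toRingHom) r.cmat_mul_smat
  simp only [Matrix.map_mul, Matrix.map_one _ (map_zero _) (map_one _)] at h
  have hc : r.cmat.map (Bialgebra.counitAlgHom k A).toRingHom = 1 := by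
    ext i j
    simp only [Matrix.map_apply, Matrix.one_apply]
    simpa using r.counit_cmat i j
  rw [hc, one_mul] at h
  have := congrFun (congrFun h i) j
  simpa [Matrix.map_apply, Matrix.one_apply] using this

lemma comul_smat (i j : Fin n) :
    Coalgebra.comul (R := k) (r.smat i j) = ∑ p, r.smat p j ⊗ₜ[k] r.smat i p := by
  classical
  set f₁ : A →+* A ⊗[k] A := (Algebra.TensorProduct.includeLeft (S := k)).toRingHom
  set f₂ : A →+* A ⊗[k] A := (Algebra.TensorProduct.includeRight (R := k) (A := A)).toRingHom
  set Δ : A →+* A ⊗[k] A := (Bialgebra.comulAlgHom k A).toRingHom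
  have hΔa : r.cmat.map Δ = r.cmat.map f₁ * r.cmat.map f₂ := by
    ext i j
    simp only [Matrix.map_apply, Matrix.mul_apply]
    rw [show Δ (r.cmat i j) = Coalgebra.comul (R := k) (r.cmat i j) from rfl, r.comul_cmat]
    congr 1; ext p
    simp [f₁, f₂, Algebra.TensorProduct.tmul_mul_tmul]
  have inv1 : r.cmat.map f₁ * r.smat.map f₁ = 1 := by
    rw [← Matrix.map_mul, r.cmat_mul_smat, Matrix.map_one _ (map_zero _) (map_one _)]
  have inv1' : r.smat.map f₁ * r.cmat.map f₁ = 1 := by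
    rw [← Matrix.map_mul, r.smat_mul_cmat, Matrix.map_one _ (map_zero _) (map_one _)]
  have inv2 : r.cmat.map f₂ * r.smat.map f₂ = 1 := by
    rw [← Matrix.map_mul, r.cmat_mul_smat, Matrix.map_one _ (map_zero _) (map_one _)]
  have inv2' : r.smat.map f₂ * r.cmat.map f₂ = 1 := by
    rw [← Matrix.map_mul, r.smat_mul_cmat, Matrix.map_one _ (map_zero _) (map_one _)]
  have invΔ : r.cmat.map Δ * r.smat.map Δ = 1 := by
    rw [← Matrix.map_mul, r.cmat_mul_smat, Matrix.map_one _ (map_zero _) (map_one _)]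
  have key : r.smat.map Δ = r.smat.map f₂ * r.smat.map f₁ := by
    have hXA : (r.smat.map f₂ * r.smat.map f₁) * r.cmat.map Δ = 1 := by
      rw [hΔa]
      calc r.smat.map ⇑f₂ * r.smat.map ⇑f₁ * (r.cmat.map ⇑f₁ * r.cmat.map ⇑f₂)
          = r.smat.map ⇑f₂ * ((r.smat.map ⇑f₁ * r.cmat.map ⇑f₁) * r.cmat.map ⇑f₂) := by
            rw [mul_assoc, mul_assoc]
        _ = 1 := by rw [inv1', one_mul, inv2']
    calc r.smat.map ⇑Δ
        = ((r.smat.map ⇑f₂ * r.smat.map ⇑f₁) * r.cmat.map ⇑Δ) * r.smat.map ⇑Δ := by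
          rw [hXA, one_mul]
      _ = (r.smat.map ⇑f₂ * r.smat.map ⇑f₁) * (r.cmat.map ⇑Δ * r.smat.map ⇑Δ) := by
          rw [mul_assoc]
      _ = r.smat.map ⇑f₂ * r.smat.map ⇑f₁ := by rw [invΔ, mul_one]
  have := congrFun (congrFun key i) j
  simp only [Matrix.map_apply, Matrix.mul_apply] at this
  rw [show Δ (r.smat i j) = Coalgebra.comul (R := k) (r.smat i j) from rfl] at this
  rw [this]
  congr 1; ext p
  simp [f₁, f₂, Algebra.TensorProduct.tmul_mul_tmul]

-- the conjugation comodule on n×n matrices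
local notation "W" => Matrix (Fin n) (Fin n) k
local notation "c" => Matrix.stdBasis k (Fin n) (Fin n)

/-- conjugation of `E` by the coaction matrix, as an element of `Mₙ(A)`. -/
noncomputable def conj (E : W) : Matrix (Fin n) (Fin n) A :=
  r.cmat * E.map (algebraMap k A) * r.smat

lemma conj_apply (E : W) (i j : Fin n) :
    r.conj E i j = ∑ pq : Fin n × Fin n, E pq.1 pq.2 • (r.cmat i pq.1 * r.smat pq.2 j) := by
  simp only [conj, Matrix.mul_apply, Finset.sum_mul, Fintype.sum_prod_type]
  rw [Finset.sum_comm]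
  refine Finset.sum_congr rfl fun p _ => Finset.sum_congr rfl fun q _ => ?_
  simp only [Matrix.map_apply, Algebra.smul_def]
  ring

lemma conj_add (E F : W) : r.conj (E + F) = r.conj E + r.conj F := by
  simp [conj, Matrix.map_add, Matrix.mul_add, Matrix.add_mul]

lemma conj_smul (t : k) (E : W) : r.conj (t • E) = t • r.conj E := by
  ext i j
  simp only [conj_apply, Matrix.smul_apply, smul_smul, Finset.smul_sum, smul_eq_mul]

/-- The coaction of conjugation on matrices. -/
noncomputable def endρ : W →ₗ[k] W ⊗[k] A where
  toFun E := ∑ ij : Fin n × Fin n, c ij ⊗ₜ[k] r.conj E ij.1 ij.2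
  map_add' E F := by
    simp [conj_add, Matrix.add_apply, TensorProduct.tmul_add, Finset.sum_add_distrib]
  map_smul' t E := by
    simp [conj_smul, Matrix.smul_apply, TensorProduct.tmul_smul, Finset.smul_sum]

lemma endρ_apply (E : W) : r.endρ E = ∑ ij : Fin n × Fin n, c ij ⊗ₜ[k] r.conj E ij.1 ij.2 :=
  rfl

lemma cT_endρ (E : W) (ij : Fin n × Fin n) :
    cT c ij (r.endρ E) = r.conj E ij.1 ij.2 := by
  rw [endρ_apply]
  exact cT_sum c ij (fun pq => r.conj E pq.1 pq.2)

lemma conj_stdBasis (ij rs : Fin n × Fin n) :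
    r.conj (c ij) rs.1 rs.2 = r.cmat rs.1 ij.1 * r.smat ij.2 rs.2 := by
  rw [conj_apply]
  rw [Matrix.stdBasis_eq_single]
  rw [Finset.sum_eq_single ij]
  · simp
  · intro pq _ hne
    rw [Matrix.single_apply_of_ne]
    · simp
    · intro hc
      exact hne (Prod.ext hc.1.symm hc.2.symm)
  · intro h; exact absurd (Finset.mem_univ ij) h

end RationalRep

namespace RationalRep
variable {k A V : Type} [Field k] [CommRing A] [HopfAlgebra k A] [AddCommGroup V]
  [Module k V] [FiniteDimensional k V] (r : RationalRep k A V)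
local notation "b" => Module.finBasis k V
local notation "n" => Module.finrank k V
local notation "W" => Matrix (Fin n) (Fin n) k
local notation "c" => Matrix.stdBasis k (Fin n) (Fin n)

lemma conj_comul (E : W) (rs : Fin n × Fin n) :
    Coalgebra.comul (R := k) (r.conj E rs.1 rs.2)
      = ∑ ij : Fin n × Fin n,
          (r.cmat rs.1 ij.1 * r.smat ij.2 rs.2) ⊗ₜ[k] r.conj E ij.1 ij.2 := by
  rw [conj_apply, map_sum]
  have h1 : ∀ pq : Fin n × Fin n,
      Coalgebra.comul (R := k) (E pq.1 pq.2 • (r.cmat rs.1 pq.1 * r.smat pq.2 rs.2))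
      = ∑ ij : Fin n × Fin n, E pq.1 pq.2 •
          ((r.cmat rs.1 ij.1 * r.smat ij.2 rs.2) ⊗ₜ[k] (r.cmat ij.1 pq.1 * r.smat pq.2 ij.2)) := by
    intro pq
    rw [map_smul, Bialgebra.comul_mul, r.comul_cmat, r.comul_smat, Finset.sum_mul_sum]
    simp only [Finset.smul_sum, Algebra.TensorProduct.tmul_mul_tmul]
    rw [← Fintype.sum_prod_type']
  simp only [h1]
  rw [Finset.sum_comm]
  refine Finset.sum_congr rfl fun ij _ => ?_
  rw [conj_apply, TensorProduct.tmul_sum]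
  refine Finset.sum_congr rfl fun pq _ => ?_
  rw [TensorProduct.tmul_smul]

lemma conj_counit (E : W) (i j : Fin n) :
    Coalgebra.counit (R := k) (r.conj E i j) = E i j := by
  rw [conj_apply, map_sum]
  have h1 : ∀ pq : Fin n × Fin n,
      Coalgebra.counit (R := k) (E pq.1 pq.2 • (r.cmat i pq.1 * r.smat pq.2 j))
      = E pq.1 pq.2 * (if i = pq.1 then 1 else 0) * (if pq.2 = j then 1 else 0) := by
    intro pq
    rw [map_smul, Bialgebra.counit_mul, r.counit_cmat, r.counit_smat, smul_eq_mul, mul_assoc]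
  simp only [h1]
  rw [Fintype.sum_prod_type]
  simp

/-- The conjugation representation on `n × n` matrices. -/
noncomputable def endRep : RationalRep k A (Matrix (Fin n) (Fin n) k) where
  ρ := r.endρ
  coassoc := by
    apply LinearMap.ext; intro E
    simp only [LinearMap.comp_apply]
    have hR : (LinearMap.lTensor W (Coalgebra.comul (R := k))) (r.endρ E)
        = ∑ rs : Fin n × Fin n, c rs ⊗ₜ[k]
            (Coalgebra.comul (R := k) (r.conj E rs.1 rs.2)) := by
      rw [endρ_apply, map_sum]
      exact Finset.sum_congr rfl fun rs _ => rfl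
    have hL : (TensorProduct.assoc k W A A).toLinearMap
        ((LinearMap.rTensor A r.endρ) (r.endρ E))
        = ∑ rs : Fin n × Fin n, c rs ⊗ₜ[k]
            (∑ ij : Fin n × Fin n,
              (r.cmat rs.1 ij.1 * r.smat ij.2 rs.2) ⊗ₜ[k] r.conj E ij.1 ij.2) := by
      rw [endρ_apply, map_sum, map_sum]
      simp only [LinearMap.rTensor_tmul, LinearEquiv.coe_coe]
      have h1 : ∀ ij : Fin n × Fin n,
          (TensorProduct.assoc k W A A) ((r.endρ (c ij)) ⊗ₜ[k] r.conj E ij.1 ij.2)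
          = ∑ rs : Fin n × Fin n, c rs ⊗ₜ[k]
              ((r.cmat rs.1 ij.1 * r.smat ij.2 rs.2) ⊗ₜ[k] r.conj E ij.1 ij.2) := by
        intro ij
        rw [endρ_apply, TensorProduct.sum_tmul, map_sum]
        refine Finset.sum_congr rfl fun rs _ => ?_
        rw [TensorProduct.assoc_tmul, conj_stdBasis]
      simp only [h1]
      rw [Finset.sum_comm]
      exact Finset.sum_congr rfl fun rs _ => (TensorProduct.tmul_sum _ _ _).symm
    rw [hL, hR]
    exact Finset.sum_congr rfl fun rs _ => by rw [r.conj_comul E rs]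
  counit := by
    apply LinearMap.ext; intro E
    simp only [LinearMap.comp_apply, LinearMap.id_apply]
    rw [endρ_apply, map_sum, map_sum]
    simp only [LinearMap.lTensor_tmul, TensorProduct.rid_tmul, LinearEquiv.coe_coe]
    simp only [conj_counit]
    rw [Fintype.sum_prod_type]
    conv_rhs => rw [Matrix.matrix_eq_sum_single E]
    refine Finset.sum_congr rfl fun i _ => Finset.sum_congr rfl fun j _ => ?_
    rw [Matrix.stdBasis_eq_single, Matrix.smul_single, smul_eq_mul, mul_one]

end RationalRep

namespace RationalRep
variable {k A B V : Type} [Field k] [CommRing A] [HopfAlgebra k A] [CommRing B]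
  [HopfAlgebra k B] [AddCommGroup V] [Module k V] [FiniteDimensional k V]
  (r : RationalRep k A V) (π : A →ₐc[k] B)

local notation "b" => Module.finBasis k V
local notation "n" => Module.finrank k V
local notation "W" => Matrix (Fin n) (Fin n) k
local notation "c" => Matrix.stdBasis k (Fin n) (Fin n)

lemma stdBasis_repr (E : W) (ij : Fin n × Fin n) :
    (Matrix.stdBasis k (Fin n) (Fin n)).repr E ij = E ij.1 ij.2 := by
  have hE : ∑ pq : Fin n × Fin n, E pq.1 pq.2 • (Matrix.stdBasis k (Fin n) (Fin n)) pq = E := by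
    rw [Fintype.sum_prod_type]
    conv_rhs => rw [Matrix.matrix_eq_sum_single E]
    refine Finset.sum_congr rfl fun i _ => Finset.sum_congr rfl fun j _ => ?_
    rw [Matrix.stdBasis_eq_single, Matrix.smul_single, smul_eq_mul, mul_one]
  conv_lhs => rw [← hE]
  simp [Finsupp.single_apply, Finset.sum_apply']

lemma cT_tmul_one {M : Type} [CommRing M] [Algebra k M] (E : W) (ij : Fin n × Fin n) :
    cT c ij (E ⊗ₜ[k] (1 : M)) = algebraMap k M (E ij.1 ij.2) := by
  have h0 : cT c ij (E ⊗ₜ[k] (1 : M)) = (Matrix.stdBasis k (Fin n) (Fin n)).repr E ij • (1 : M) := by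
    simp [cT, Module.Basis.coord_apply]
  rw [h0, stdBasis_repr]
  exact (Algebra.algebraMap_eq_smul_one _).symm

/-- membership in `fixedPointsUnder π` of the conjugation rep, via matrices. -/
lemma endRep_fixedPointsUnder (E : W)
    (h : r.cmat.map π * E.map (algebraMap k B) = E.map (algebraMap k B) * r.cmat.map π) :
    E ∈ r.endRep.fixedPointsUnder π := by
  set πr : A →+* B := ((π : A →ₐ[k] B) : A →+* B) with hπr
  have hπfun : ⇑πr = ⇑π := rfl
  have hcs : r.cmat.map π * r.smat.map π = 1 := by
    have h0 := congrArg (Matrix.map · ⇑πr) r.cmat_mul_smat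
    simp only [Matrix.map_mul, Matrix.map_one _ (map_zero _) (map_one _)] at h0
    rw [← hπfun]
    exact h0
  have hconj : ∀ ij : Fin n × Fin n, π (r.conj E ij.1 ij.2) = algebraMap k B (E ij.1 ij.2) := by
    intro ij
    have h1 : (E.map (algebraMap k A)).map ⇑πr = E.map (algebraMap k B) := by
      ext i j
      simp only [Matrix.map_apply, hπfun]
      exact AlgHomClass.commutes π (E i j)
    have hm : (r.conj E).map ⇑πr
        = r.cmat.map ⇑πr * E.map (algebraMap k B) * r.smat.map ⇑πr := by
      rw [conj, Matrix.map_mul, Matrix.map_mul, h1]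
    have hm2 : r.cmat.map ⇑πr * E.map (algebraMap k B) * r.smat.map ⇑πr
        = E.map (algebraMap k B) := by
      rw [hπfun, h, mul_assoc, hcs, mul_one]
    have h3 := congrFun (congrFun (hm.trans hm2) ij.1) ij.2
    simpa [Matrix.map_apply, hπfun] using h3
  show LinearMap.lTensor W (π : A →ₗ[k] B) (r.endρ E) = E ⊗ₜ[k] (1 : B)
  rw [endρ_apply, map_sum]
  apply cT_ext c
  intro ij
  rw [cT_tmul_one]
  have : ∀ pq : Fin n × Fin n,
      (LinearMap.lTensor W (π : A →ₗ[k] B)) (c pq ⊗ₜ[k] r.conj E pq.1 pq.2)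
        = c pq ⊗ₜ[k] π (r.conj E pq.1 pq.2) := fun pq => rfl
  simp only [this, hconj]
  exact cT_sum c ij fun pq => algebraMap k B (E pq.1 pq.2)

/-- membership in `fixedPoints` of the conjugation rep gives the matrix commutation. -/
lemma comm_of_endRep_fixedPoints (E : W) (h : E ∈ r.endRep.fixedPoints) :
    r.cmat * E.map (algebraMap k A) = E.map (algebraMap k A) * r.cmat := by
  have h' : r.endρ E = E ⊗ₜ[k] (1 : A) := h
  have hconj : r.conj E = E.map (algebraMap k A) := by
    ext i j
    have h1 := congrArg (cT c (i, j)) h'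
    rw [cT_endρ, cT_tmul_one] at h1
    simpa [Matrix.map_apply] using h1
  have := congrArg (· * r.cmat) hconj
  simpa only [conj, mul_assoc, r.smat_mul_cmat, mul_one] using this

end RationalRep

namespace RationalRep
variable {k A B V : Type} [Field k] [CommRing A] [HopfAlgebra k A] [CommRing B]
  [HopfAlgebra k B] [AddCommGroup V] [Module k V] [FiniteDimensional k V]
  (r : RationalRep k A V) (π : A →ₐc[k] B)

local notation "b" => Module.finBasis k V
local notation "n" => Module.finrank k V

lemma e_basis (e : V →ₗ[k] V) (j : Fin n) :
    e (b j) = ∑ p, (LinearMap.toMatrix b b e) p j • b p := by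
  conv_lhs => rw [← Matrix.toLin_toMatrix b b e]
  rw [Matrix.toLin_self]

lemma equivariant_of_comm (e : V →ₗ[k] V)
    (h : r.cmat * (LinearMap.toMatrix b b e).map (algebraMap k A)
      = (LinearMap.toMatrix b b e).map (algebraMap k A) * r.cmat) :
    ∀ v, r.ρ (e v) = LinearMap.rTensor A e (r.ρ v) := by
  set E := LinearMap.toMatrix b b e with hE
  have hmap : r.ρ ∘ₗ e = (LinearMap.rTensor A e) ∘ₗ r.ρ := by
    apply Module.Basis.ext (Module.finBasis k V); intro j
    simp only [LinearMap.comp_apply]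
    have hLHS : r.ρ (e (b j)) = ∑ i, b i ⊗ₜ[k] ((r.cmat * E.map (algebraMap k A)) i j) := by
      rw [e_basis e j, map_sum, ← hE]
      calc ∑ p, r.ρ (E p j • b p)
          = ∑ p, ∑ i, b i ⊗ₜ[k] (E p j • r.cmat i p) := by
            refine Finset.sum_congr rfl fun p _ => ?_
            rw [map_smul, rho_basis, Finset.smul_sum]
            exact Finset.sum_congr rfl fun i _ => (TensorProduct.tmul_smul _ _ _).symm
        _ = ∑ i, ∑ p, b i ⊗ₜ[k] (E p j • r.cmat i p) := Finset.sum_comm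
        _ = ∑ i, b i ⊗ₜ[k] ((r.cmat * E.map (algebraMap k A)) i j) := by
            refine Finset.sum_congr rfl fun i _ => ?_
            rw [← TensorProduct.tmul_sum]
            congr 1
            rw [Matrix.mul_apply]
            refine Finset.sum_congr rfl fun p _ => ?_
            rw [Matrix.map_apply, Algebra.smul_def, mul_comm]
    have hRHS : LinearMap.rTensor A e (r.ρ (b j))
        = ∑ p, b p ⊗ₜ[k] ((E.map (algebraMap k A) * r.cmat) p j) := by
      rw [rho_basis, map_sum]
      calc ∑ i, LinearMap.rTensor A e (b i ⊗ₜ[k] r.cmat i j)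
          = ∑ i, ∑ p, b p ⊗ₜ[k] (E p i • r.cmat i j) := by
            refine Finset.sum_congr rfl fun i _ => ?_
            rw [LinearMap.rTensor_tmul, e_basis e i, TensorProduct.sum_tmul]
            refine Finset.sum_congr rfl fun p _ => ?_
            rw [TensorProduct.smul_tmul, TensorProduct.tmul_smul]
        _ = ∑ p, ∑ i, b p ⊗ₜ[k] (E p i • r.cmat i j) := Finset.sum_comm
        _ = ∑ p, b p ⊗ₜ[k] ((E.map (algebraMap k A) * r.cmat) p j) := by
            refine Finset.sum_congr rfl fun p _ => ?_
            rw [← TensorProduct.tmul_sum]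
            congr 1
            rw [Matrix.mul_apply]
            refine Finset.sum_congr rfl fun i _ => ?_
            rw [Matrix.map_apply, Algebra.smul_def]
    rw [hLHS, hRHS, h]
  exact fun v => LinearMap.congr_fun hmap v

lemma comm_of_equivariant_under (e : V →ₗ[k] V)
    (h : ∀ v, LinearMap.lTensor V (π : A →ₗ[k] B) (r.ρ (e v))
      = LinearMap.rTensor B e (LinearMap.lTensor V (π : A →ₗ[k] B) (r.ρ v))) :
    r.cmat.map π * (LinearMap.toMatrix b b e).map (algebraMap k B)
      = (LinearMap.toMatrix b b e).map (algebraMap k B) * r.cmat.map π := by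
  set E := LinearMap.toMatrix b b e with hE
  ext i j
  have hπbasis : ∀ j : Fin n, LinearMap.lTensor V (π : A →ₗ[k] B) (r.ρ (b j))
      = ∑ i, b i ⊗ₜ[k] π (r.cmat i j) := by
    intro j
    rw [rho_basis, map_sum]
    exact Finset.sum_congr rfl fun i _ => rfl
  have h0 := h (b j)
  have hLHS : LinearMap.lTensor V (π : A →ₗ[k] B) (r.ρ (e (b j)))
      = ∑ i, b i ⊗ₜ[k] ((r.cmat.map π * E.map (algebraMap k B)) i j) := by
    rw [e_basis e j, map_sum, map_sum, ← hE]
    calc ∑ p, LinearMap.lTensor V (π : A →ₗ[k] B) (r.ρ (E p j • b p))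
        = ∑ p, ∑ i, b i ⊗ₜ[k] (E p j • π (r.cmat i p)) := by
          refine Finset.sum_congr rfl fun p _ => ?_
          rw [map_smul, map_smul, hπbasis, Finset.smul_sum]
          exact Finset.sum_congr rfl fun i _ => (TensorProduct.tmul_smul _ _ _).symm
      _ = ∑ i, ∑ p, b i ⊗ₜ[k] (E p j • π (r.cmat i p)) := Finset.sum_comm
      _ = ∑ i, b i ⊗ₜ[k] ((r.cmat.map π * E.map (algebraMap k B)) i j) := by
          refine Finset.sum_congr rfl fun i _ => ?_
          rw [← TensorProduct.tmul_sum]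
          congr 1
          rw [Matrix.mul_apply]
          refine Finset.sum_congr rfl fun p _ => ?_
          rw [Matrix.map_apply, Matrix.map_apply, Algebra.smul_def, mul_comm]
  have hRHS : LinearMap.rTensor B e (LinearMap.lTensor V (π : A →ₗ[k] B) (r.ρ (b j)))
      = ∑ p, b p ⊗ₜ[k] ((E.map (algebraMap k B) * r.cmat.map π) p j) := by
    rw [hπbasis, map_sum]
    calc ∑ i, LinearMap.rTensor B e (b i ⊗ₜ[k] π (r.cmat i j))
        = ∑ i, ∑ p, b p ⊗ₜ[k] (E p i • π (r.cmat i j)) := by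
          refine Finset.sum_congr rfl fun i _ => ?_
          rw [LinearMap.rTensor_tmul, e_basis e i, TensorProduct.sum_tmul]
          refine Finset.sum_congr rfl fun p _ => ?_
          rw [TensorProduct.smul_tmul, TensorProduct.tmul_smul]
      _ = ∑ p, ∑ i, b p ⊗ₜ[k] (E p i • π (r.cmat i j)) := Finset.sum_comm
      _ = ∑ p, b p ⊗ₜ[k] ((E.map (algebraMap k B) * r.cmat.map π) p j) := by
          refine Finset.sum_congr rfl fun p _ => ?_
          rw [← TensorProduct.tmul_sum]
          congr 1
          rw [Matrix.mul_apply]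
          refine Finset.sum_congr rfl fun i _ => ?_
          rw [Matrix.map_apply, Matrix.map_apply, Algebra.smul_def]
  rw [hLHS, hRHS] at h0
  have h1 := congrArg (cT b i) h0
  rw [cT_sum, cT_sum] at h1
  exact h1

end RationalRep

/-- If `V^H = V^G` for every finite-dimensional `G`-module `V`, then every direct sum
decomposition of a finite-dimensional `G`-module into `H`-submodules is a decomposition
into `G`-submodules. -/
theorem decompositions_descend_of_fixedPoints_eq
    (k A B : Type) [Field k] [CommRing A] [HopfAlgebra k A] [CommRing B]
    [HopfAlgebra k B] (hA : Algebra.FiniteType k A) (hB : Algebra.FiniteType k B)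
    (π : A →ₐc[k] B) (hπ : Function.Surjective π)
    (hfix : ∀ (V : Type) (_ : AddCommGroup V) (_ : Module k V)
      (_ : FiniteDimensional k V) (r : RationalRep k A V),
      r.fixedPointsUnder π = r.fixedPoints) :
    ∀ (V : Type) (_ : AddCommGroup V) (_ : Module k V) (_ : FiniteDimensional k V)
      (r : RationalRep k A V) (V₁ V₂ : Submodule k V), IsCompl V₁ V₂ →
      r.IsSubrepUnder π V₁ → r.IsSubrepUnder π V₂ →
      r.IsSubrep V₁ ∧ r.IsSubrep V₂ := by
  intro V _ _ _ r V₁ V₂ hc h1 h2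
  classical
  set bV := Module.finBasis k V with hbV
  set p₁ := V₁.linearProjOfIsCompl V₂ hc with hp₁
  set p₂ := V₂.linearProjOfIsCompl V₁ hc.symm with hp₂
  set e : V →ₗ[k] V := V₁.subtype ∘ₗ p₁ with he
  set e₂ : V →ₗ[k] V := V₂.subtype ∘ₗ p₂ with he₂
  have hsub1 : e ∘ₗ V₁.subtype = V₁.subtype := by
    ext x
    simp [he, hp₁, Submodule.linearProjOfIsCompl, Submodule.linearProjOfIsCompl_apply_left hc]
  have hsub2 : e ∘ₗ V₂.subtype = 0 := by
    ext x
    simp [he, hp₁, Submodule.linearProjOfIsCompl, Submodule.linearProjOfIsCompl_apply_right hc]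
  have heq : ∀ v, LinearMap.lTensor V (π : A →ₗ[k] B) (r.ρ (e v))
      = LinearMap.rTensor B e (LinearMap.lTensor V (π : A →ₗ[k] B) (r.ρ v)) := by
    intro v
    obtain ⟨y₁, hy₁⟩ := h1 (p₁ v) (Submodule.coe_mem _)
    obtain ⟨y₂, hy₂⟩ := h2 (p₂ v) (Submodule.coe_mem _)
    have hv : ((p₁ v : V) + (p₂ v : V)) = v :=
      Submodule.projection_add_projection_eq_self hc v
    have hev : e v = (p₁ v : V) := rfl
    have key1 : LinearMap.rTensor B e
        (LinearMap.lTensor V (π : A →ₗ[k] B) (r.ρ (p₁ v : V)))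
        = LinearMap.lTensor V (π : A →ₗ[k] B) (r.ρ (p₁ v : V)) := by
      rw [← hy₁, ← LinearMap.comp_apply, ← LinearMap.rTensor_comp, hsub1]
    have key2 : LinearMap.rTensor B e
        (LinearMap.lTensor V (π : A →ₗ[k] B) (r.ρ (p₂ v : V))) = 0 := by
      rw [← hy₂, ← LinearMap.comp_apply, ← LinearMap.rTensor_comp, hsub2,
        LinearMap.rTensor_zero, LinearMap.zero_apply]
    conv_rhs => rw [← hv]
    rw [map_add, map_add, map_add, key1, key2, add_zero, hev]
  have hcommB := r.comm_of_equivariant_under π e heq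
  have hfixmem := r.endRep_fixedPointsUnder π (LinearMap.toMatrix bV bV e) hcommB
  have hfixA : LinearMap.toMatrix bV bV e ∈ r.endRep.fixedPoints := by
    have hfe := hfix (Matrix (Fin (Module.finrank k V)) (Fin (Module.finrank k V)) k)
      inferInstance inferInstance inferInstance r.endRep
    rw [← hfe]
    exact hfixmem
  have hcommA := r.comm_of_endRep_fixedPoints (LinearMap.toMatrix bV bV e) hfixA
  have hequivA : ∀ v, r.ρ (e v) = LinearMap.rTensor A e (r.ρ v) :=
    r.equivariant_of_comm e hcommA
  constructor
  · intro v hv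
    have hev : e v = v := by
      have : p₁ v = ⟨v, hv⟩ := by
        rw [hp₁]
        exact Submodule.linearProjOfIsCompl_apply_left hc ⟨v, hv⟩
      rw [he]
      simp only [LinearMap.comp_apply, this, Submodule.subtype_apply]
    refine ⟨LinearMap.rTensor A p₁ (r.ρ v), ?_⟩
    rw [← LinearMap.comp_apply, ← LinearMap.rTensor_comp, ← he]
    rw [← hequivA v, hev]
  · intro v hv
    have hev : e v = 0 := by
      have : p₁ v = 0 := by
        rw [hp₁]
        exact Submodule.linearProjOfIsCompl_apply_right' hc hv
      rw [he]
      simp only [LinearMap.comp_apply, this, map_zero]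
    have h0 : LinearMap.rTensor A e (r.ρ v) = 0 := by
      rw [← hequivA v, hev, map_zero]
    have hsum : e + e₂ = LinearMap.id := by
      ext w
      exact Submodule.projection_add_projection_eq_self hc w
    refine ⟨LinearMap.rTensor A p₂ (r.ρ v), ?_⟩
    rw [← LinearMap.comp_apply, ← LinearMap.rTensor_comp, ← he₂]
    have hid : LinearMap.rTensor A (e + e₂) (r.ρ v) = r.ρ v := by
      rw [hsum, LinearMap.rTensor_id, LinearMap.id_apply]
    rw [LinearMap.rTensor_add, LinearMap.add_apply, h0, zero_add] at hid
    exact hid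
end

section
/- Let G be an affine algebraic group over a field k and H an algebraic subgroup such that for every finite-dimensional G-module V, any direct sum decomposition of V into H-submodules is a decomposition into G-submodules. Then H is affine epimorphic in G: any two morphisms from G to an affine algebraic group agreeing on H are equal. -/
open TensorProduct

namespace EpiAux

theorem rid_natural {R : Type*} [CommRing R] {M N : Type*} [AddCommGroup M] [Module R M]
    [AddCommGroup N] [Module R N] (f : M →ₗ[R] N) :
    (TensorProduct.rid R N).toLinearMap ∘ₗ f.rTensor R
      = f ∘ₗ (TensorProduct.rid R M).toLinearMap := by
  ext m; simp

theorem assoc_natural_left {R : Type*} [CommRing R] {M N P Q : Type*} [AddCommGroup M]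
    [Module R M] [AddCommGroup N] [Module R N] [AddCommGroup P] [Module R P]
    [AddCommGroup Q] [Module R Q] (f : M →ₗ[R] N) :
    (TensorProduct.assoc R N P Q).toLinearMap ∘ₗ (f.rTensor P).rTensor Q
      = f.rTensor (P ⊗[R] Q) ∘ₗ (TensorProduct.assoc R M P Q).toLinearMap := by
  apply TensorProduct.ext_threefold; intro x y z; simp



theorem exists_sum_basis {k M C : Type*} [Field k] [AddCommGroup M] [Module k M]
    [AddCommGroup C] [Module k C] {ι : Type*} [Fintype ι] (b : Module.Basis ι k C) (u : M ⊗[k] C) :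
    ∃ m : ι → M, u = ∑ j, m j ⊗ₜ[k] b j := by
  induction u with
  | zero => exact ⟨0, by simp⟩
  | tmul x c =>
    refine ⟨fun j => b.repr c j • x, ?_⟩
    conv_lhs => rw [← b.sum_repr c]
    rw [tmul_sum]
    refine Finset.sum_congr rfl fun j _ => ?_
    rw [tmul_smul, smul_tmul']
  | add u v hu hv =>
    obtain ⟨mu, hmu⟩ := hu
    obtain ⟨mv, hmv⟩ := hv
    exact ⟨mu + mv, by simp [hmu, hmv, add_tmul, Finset.sum_add_distrib]⟩

variable {k A' : Type*} [Field k] [AddCommGroup A'] [Module k A'] [Coalgebra k A']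

/-- Every element of a coalgebra over a field lies in a finite-dimensional subcomodule. -/
theorem exists_fd_subcomodule (a : A') :
    ∃ V : Submodule k A', FiniteDimensional k ↥V ∧ a ∈ V ∧
      ∀ v ∈ V, Coalgebra.comul (R := k) v
        ∈ LinearMap.range (LinearMap.rTensor A' V.subtype) := by
  classical
  obtain ⟨sfin, hsfin⟩ := TensorProduct.exists_finset (R := k) (Coalgebra.comul (R := k) a)
  set C : Submodule k A' := Submodule.span k (sfin.image Prod.snd : Finset A') with hC
  haveI : FiniteDimensional k ↥C := FiniteDimensional.span_of_finite k (Finset.finite_toSet _)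
  set b := Module.finBasis k ↥C with hb
  -- comul a lies in A' ⊗ C
  have hmemC : ∀ p ∈ sfin, (p : A' × A').2 ∈ C := fun p hp =>
    Submodule.subset_span (Finset.mem_coe.2 (Finset.mem_image_of_mem Prod.snd hp))
  have hu : ∃ u : A' ⊗[k] ↥C, (C.subtype.lTensor A') u = Coalgebra.comul (R := k) a := by
    refine ⟨∑ p ∈ sfin.attach, (p : A' × A').1 ⊗ₜ[k] ⟨(p : A' × A').2, hmemC p p.2⟩, ?_⟩
    rw [map_sum, hsfin, ← Finset.sum_attach sfin (fun p => p.1 ⊗ₜ[k] p.2)]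
    exact Finset.sum_congr rfl fun p _ => rfl
  obtain ⟨u, hu⟩ := hu
  obtain ⟨g, hg⟩ := exists_sum_basis b u
  have hcomul_a : Coalgebra.comul (R := k) a = ∑ j, g j ⊗ₜ[k] ((b j : ↥C) : A') := by
    rw [← hu, hg, map_sum]; rfl
  -- the coordinate functionals
  obtain ⟨p, hp⟩ := C.subtype.exists_leftInverse_of_injective C.ker_subtype
  set V : Submodule k A' := Submodule.span k (insert a (Set.range g)) with hV
  haveI hVfd : FiniteDimensional k ↥V :=
    FiniteDimensional.span_of_finite k ((Set.finite_range g).insert a)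
  have hgV : ∀ j, g j ∈ V := fun j =>
    Submodule.subset_span (Set.mem_insert_of_mem _ ⟨j, rfl⟩)
  have haV : a ∈ V := Submodule.subset_span (Set.mem_insert _ _)
  refine ⟨V, hVfd, haV, ?_⟩
  have hspan : V ≤ Submodule.comap (Coalgebra.comul (R := k) : A' →ₗ[k] A' ⊗[k] A')
      (LinearMap.range (LinearMap.rTensor A' V.subtype)) := by
    rw [hV, Submodule.span_le]
    rintro x (rfl | ⟨j, rfl⟩)
    · -- x = a
      refine Submodule.mem_comap.2 (LinearMap.mem_range.2
        ⟨∑ j, (⟨g j, hgV j⟩ : ↥V) ⊗ₜ[k] ((b j : ↥C) : A'), ?_⟩)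
      rw [map_sum, hcomul_a]
      rfl
    · -- x = g j
      set f : A' →ₗ[k] k := b.coord j ∘ₗ p with hf
      have hfb : ∀ i, f ((b i : ↥C) : A') = if i = j then 1 else 0 := by
        intro i
        have : p ((b i : ↥C) : A') = b i := LinearMap.congr_fun hp (b i)
        simp [hf, this, Module.Basis.coord_apply, Module.Basis.repr_self, Finsupp.single_apply]
      set Lf : A' ⊗[k] A' →ₗ[k] A' :=
        (TensorProduct.rid k A').toLinearMap ∘ₗ f.lTensor A' with hLf
      set G : A' ⊗[k] (A' ⊗[k] A') →ₗ[k] A' ⊗[k] A' := Lf.lTensor A' with hG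
      have keyG : ∀ (w : A' ⊗[k] A') (z : A'),
          G ((TensorProduct.assoc k A' A' A') (w ⊗ₜ[k] z)) = f z • w := by
        intro w z
        induction w with
        | zero => simp
        | tmul x y => simp [hG, hLf, smul_tmul, tmul_smul]
        | add w₁ w₂ h₁ h₂ =>
          rw [add_tmul, map_add, map_add, h₁, h₂, smul_add]
      have e1 : G ((TensorProduct.assoc k A' A' A')
          ((Coalgebra.comul (R := k)).rTensor A' (Coalgebra.comul (R := k) a)))
          = Coalgebra.comul (R := k) (g j) := by
        rw [hcomul_a, map_sum, map_sum, map_sum]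
        have : ∀ i, G ((TensorProduct.assoc k A' A' A')
            ((Coalgebra.comul (R := k)).rTensor A' (g i ⊗ₜ[k] ((b i : ↥C) : A'))))
            = if i = j then Coalgebra.comul (R := k) (g i) else 0 := by
          intro i
          rw [LinearMap.rTensor_tmul, keyG, hfb]
          split <;> simp
        rw [Finset.sum_congr rfl fun i _ => this i]
        simp
      have e2 : G ((Coalgebra.comul (R := k)).lTensor A' (Coalgebra.comul (R := k) a))
          = LinearMap.rTensor A' V.subtype
            (∑ i, (⟨g i, hgV i⟩ : ↥V) ⊗ₜ[k] Lf (Coalgebra.comul (R := k) ((b i : ↥C) : A'))) := by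
        rw [hcomul_a, map_sum, map_sum, map_sum]
        rfl
      refine Submodule.mem_comap.2 (LinearMap.mem_range.2
        ⟨∑ i, (⟨g i, hgV i⟩ : ↥V) ⊗ₜ[k] Lf (Coalgebra.comul (R := k) ((b i : ↥C) : A')), ?_⟩)
      rw [← e2, ← Coalgebra.coassoc_apply, e1]

  intro v hv
  exact hspan hv

theorem range_rTensor_mono {M : Type*} [AddCommGroup M] [Module k M]
    {U U' : Submodule k A'} (h : U ≤ U') :
    LinearMap.range (LinearMap.rTensor M U.subtype)
      ≤ LinearMap.range (LinearMap.rTensor M U'.subtype) := by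
  rintro x ⟨t, rfl⟩
  refine ⟨LinearMap.rTensor M (Submodule.inclusion h) t, ?_⟩
  rw [← LinearMap.rTensor_comp_apply]
  congr 1

theorem exists_fd_subcomodule_finset (s : Finset A') :
    ∃ V : Submodule k A', FiniteDimensional k ↥V ∧ (↑s : Set A') ⊆ V ∧
      ∀ v ∈ V, Coalgebra.comul (R := k) v
        ∈ LinearMap.range (LinearMap.rTensor A' V.subtype) := by
  classical
  choose W hfd hmem hsub using fun x : A' => exists_fd_subcomodule (k := k) x
  refine ⟨s.sup W, ?_, ?_, ?_⟩
  · exact Submodule.finiteDimensional_finset_sup s W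
  · intro x hx
    exact Finset.le_sup (f := W) hx (hmem x)
  · refine Finset.sup_induction (p := fun U : Submodule k A' =>
        ∀ v ∈ U, Coalgebra.comul (R := k) v
          ∈ LinearMap.range (LinearMap.rTensor A' U.subtype)) ?_ ?_ (fun x _ => hsub x)
    · intro v hv
      rw [(Submodule.mem_bot k).mp hv]
      exact ⟨0, by simp⟩
    · intro U hU U' hU' v hv
      obtain ⟨v₁, h₁, v₂, h₂, rfl⟩ := Submodule.mem_sup.mp hv
      rw [map_add]
      exact add_mem (range_rTensor_mono le_sup_left (hU v₁ h₁))
        (range_rTensor_mono le_sup_right (hU' v₂ h₂))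

end EpiAux

theorem EpiAux.lTensor_rTensor_swap {R M N P Q : Type*} [CommRing R] [AddCommGroup M]
    [Module R M] [AddCommGroup N] [Module R N] [AddCommGroup P] [Module R P]
    [AddCommGroup Q] [Module R Q] (f : M →ₗ[R] N) (g : P →ₗ[R] Q) (x : M ⊗[R] P) :
    g.lTensor N (f.rTensor P x) = f.rTensor Q (g.lTensor M x) := by
  rw [← LinearMap.comp_apply, LinearMap.lTensor_comp_rTensor,
    ← LinearMap.rTensor_comp_lTensor, LinearMap.comp_apply]

theorem EpiAux.rTensor_range_mem {R M N P : Type*} [CommRing R] [AddCommGroup M]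
    [Module R M] [AddCommGroup N] [Module R N] [AddCommGroup P] [Module R P]
    (f : M →ₗ[R] N) (x : M ⊗[R] P) :
    LinearMap.rTensor P f x
      ∈ LinearMap.range (LinearMap.rTensor P (LinearMap.range f).subtype) := by
  refine ⟨(f.rangeRestrict).rTensor P x, ?_⟩
  rw [← LinearMap.rTensor_comp_apply]
  congr 1

section Reps


theorem rTensor_ofInjective_symm {R M N : Type*} [CommRing R] [AddCommGroup M] [Module R M]
    [AddCommGroup N] [Module R N] (f : M →ₗ[R] N) (hf : Function.Injective f)
    (y : LinearMap.range f) : f ((LinearEquiv.ofInjective f hf).symm y) = (y : N) := by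
  conv_rhs => rw [← (LinearEquiv.ofInjective f hf).apply_symm_apply y]
  rw [LinearEquiv.ofInjective_apply]

variable {k A' : Type} [Field k] [CommRing A'] [HopfAlgebra k A']
variable (V : Submodule k A')
  (h : ∀ v ∈ V, Coalgebra.comul (R := k) v ∈ LinearMap.range (LinearMap.rTensor A' V.subtype))

/-- The comodule structure on a subcomodule `V ⊆ A'`. -/
noncomputable def subComul : ↥V →ₗ[k] ↥V ⊗[k] A' :=
  (LinearEquiv.ofInjective (LinearMap.rTensor A' V.subtype)
      (Module.Flat.rTensor_preserves_injective_linearMap V.subtype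
        V.injective_subtype)).symm.toLinearMap
    ∘ₗ LinearMap.codRestrict (LinearMap.range (LinearMap.rTensor A' V.subtype))
        ((Coalgebra.comul (R := k)) ∘ₗ V.subtype) (fun v => h (v : A') v.2)

theorem subComul_spec (v : ↥V) :
    LinearMap.rTensor A' V.subtype (subComul V h v) = Coalgebra.comul (R := k) (v : A') := by
  unfold subComul
  exact LinearEquiv.ofInjective_symm_apply (LinearMap.rTensor A' V.subtype)
    (h := Module.Flat.rTensor_preserves_injective_linearMap (M := A') V.subtype V.injective_subtype) _

theorem rTensor_comp_subComul :
    LinearMap.rTensor A' V.subtype ∘ₗ subComul V h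
      = (Coalgebra.comul (R := k)) ∘ₗ V.subtype :=
  LinearMap.ext fun v => subComul_spec V h v

/-- A subcomodule of `A'` is a rational representation. -/
noncomputable def subRep : RationalRep k A' ↥V where
  ρ := subComul V h
  coassoc := by
    set δ := subComul V h with hδ
    set j := V.subtype with hj
    have hinj2 : Function.Injective (j.rTensor (A' ⊗[k] A')) :=
      Module.Flat.rTensor_preserves_injective_linearMap j V.injective_subtype
    apply LinearMap.ext
    intro v
    apply hinj2
    simp only [LinearMap.comp_apply, LinearEquiv.coe_coe]
    have e0 : ∀ y : (↥V ⊗[k] A') ⊗[k] A',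
        j.rTensor (A' ⊗[k] A') ((TensorProduct.assoc k ↥V A' A') y)
          = (TensorProduct.assoc k A' A' A') ((j.rTensor A').rTensor A' y) :=
      fun y => (LinearMap.congr_fun (EpiAux.assoc_natural_left j) y).symm
    have e1 : (j.rTensor A').rTensor A' (δ.rTensor A' (δ v))
        = (Coalgebra.comul (R := k) : A' →ₗ[k] A' ⊗[k] A').rTensor A'
            (Coalgebra.comul (R := k) (v : A')) := by
      rw [← LinearMap.rTensor_comp_apply, rTensor_comp_subComul,
        LinearMap.rTensor_comp_apply]
      rw [subComul_spec]
    have e2 : j.rTensor (A' ⊗[k] A')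
          ((Coalgebra.comul (R := k) : A' →ₗ[k] A' ⊗[k] A').lTensor ↥V (δ v))
        = (Coalgebra.comul (R := k) : A' →ₗ[k] A' ⊗[k] A').lTensor A'
            (j.rTensor A' (δ v)) := by
      rw [← LinearMap.comp_apply, LinearMap.rTensor_comp_lTensor,
        ← LinearMap.lTensor_comp_rTensor, LinearMap.comp_apply]
    rw [e0, e1, e2, subComul_spec]
    exact Coalgebra.coassoc_apply (R := k) (v : A')
  counit := by
    set δ := subComul V h with hδ
    set j := V.subtype with hj
    apply LinearMap.ext
    intro v
    apply V.injective_subtype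
    simp only [LinearMap.comp_apply, LinearEquiv.coe_coe, LinearMap.id_apply]
    have e0 : ∀ y : ↥V ⊗[k] k,
        j ((TensorProduct.rid k ↥V) y) = (TensorProduct.rid k A') (j.rTensor k y) :=
      fun y => (LinearMap.congr_fun (EpiAux.rid_natural j) y).symm
    have e1 : j.rTensor k ((Coalgebra.counit (R := k) : A' →ₗ[k] k).lTensor ↥V (δ v))
        = (Coalgebra.counit (R := k) : A' →ₗ[k] k).lTensor A' (j.rTensor A' (δ v)) := by
      rw [← LinearMap.comp_apply, LinearMap.rTensor_comp_lTensor,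
        ← LinearMap.lTensor_comp_rTensor, LinearMap.comp_apply]
    rw [e0, e1, subComul_spec]
    rw [Coalgebra.lTensor_counit_comul (R := k)]
    simp

end Reps

section Push

variable {k A' A V : Type} [Field k] [CommRing A'] [HopfAlgebra k A'] [CommRing A]
  [HopfAlgebra k A] [AddCommGroup V] [Module k V]

theorem assoc_natural_right₂ {R : Type*} [CommRing R] {M P P' : Type*} [AddCommGroup M]
    [Module R M] [AddCommGroup P] [Module R P] [AddCommGroup P'] [Module R P']
    (φ : P →ₗ[R] P') :
    (TensorProduct.assoc R M P' P').toLinearMap ∘ₗ (φ.lTensor M).rTensor P'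
        ∘ₗ φ.lTensor (M ⊗[R] P)
      = (TensorProduct.map φ φ).lTensor M ∘ₗ (TensorProduct.assoc R M P P).toLinearMap := by
  apply TensorProduct.ext_threefold; intro x y z; simp

/-- Push a rational representation forward along a Hopf algebra map. -/
noncomputable def RationalRep.push (r : RationalRep k A' V) (φ : A' →ₐc[k] A) :
    RationalRep k A V where
  ρ := (φ : A' →ₗ[k] A).lTensor V ∘ₗ r.ρ
  coassoc := by
    set φL := (φ : A' →ₗ[k] A) with hφL
    apply LinearMap.ext
    intro v
    simp only [LinearMap.comp_apply, LinearEquiv.coe_coe]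
    have e1 : (φL.lTensor V ∘ₗ r.ρ).rTensor A (φL.lTensor V (r.ρ v))
        = (φL.lTensor V).rTensor A (φL.lTensor (V ⊗[k] A') ((r.ρ).rTensor A' (r.ρ v))) := by
      rw [LinearMap.rTensor_comp, LinearMap.comp_apply, ← LinearMap.comp_apply
        ((r.ρ).rTensor A), LinearMap.rTensor_comp_lTensor, ← LinearMap.lTensor_comp_rTensor,
        LinearMap.comp_apply]
    have e2 := LinearMap.congr_fun (assoc_natural_right₂ (M := V) φL)
      ((r.ρ).rTensor A' (r.ρ v))
    simp only [LinearMap.comp_apply, LinearEquiv.coe_coe] at e2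
    rw [e1, e2]
    have e3 := LinearMap.congr_fun r.coassoc v
    simp only [LinearMap.comp_apply, LinearEquiv.coe_coe] at e3
    rw [e3, ← LinearMap.comp_apply, ← LinearMap.lTensor_comp,
      show TensorProduct.map φL φL ∘ₗ (Coalgebra.comul (R := k)) =
        (Coalgebra.comul (R := k)) ∘ₗ φL from CoalgHomClass.map_comp_comul φ,
      LinearMap.lTensor_comp, LinearMap.comp_apply]
  counit := by
    set φL := (φ : A' →ₗ[k] A) with hφL
    apply LinearMap.ext
    intro v
    simp only [LinearMap.comp_apply, LinearEquiv.coe_coe, LinearMap.id_apply]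
    rw [← LinearMap.comp_apply
        ((Coalgebra.counit (R := k) (A := A)).lTensor V) (φL.lTensor V),
      ← LinearMap.lTensor_comp,
      show (Coalgebra.counit (R := k) (A := A)) ∘ₗ φL = (Coalgebra.counit (R := k) (A := A'))
        from CoalgHomClass.counit_comp φ]
    exact LinearMap.congr_fun r.counit v

end Push

section Prod

variable {k A V₁ V₂ : Type} [Field k] [CommRing A] [HopfAlgebra k A]
  [AddCommGroup V₁] [Module k V₁] [AddCommGroup V₂] [Module k V₂]

/-- The direct sum of two rational representations. -/
noncomputable def RationalRep.prodRep (r₁ : RationalRep k A V₁) (r₂ : RationalRep k A V₂) :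
    RationalRep k A (V₁ × V₂) where
  ρ := LinearMap.coprod ((LinearMap.inl k V₁ V₂).rTensor A ∘ₗ r₁.ρ)
    ((LinearMap.inr k V₁ V₂).rTensor A ∘ₗ r₂.ρ)
  coassoc := by
    apply LinearMap.prod_ext <;> apply LinearMap.ext <;> intro v <;>
      simp only [LinearMap.comp_apply, LinearEquiv.coe_coe, LinearMap.coprod_inl,
        LinearMap.coprod_inr, LinearMap.coprod_apply, LinearMap.inl_apply,
        LinearMap.inr_apply, map_zero, add_zero, zero_add]
    · -- inl component
      rw [← LinearMap.rTensor_comp_apply, LinearMap.coprod_inl, LinearMap.rTensor_comp_apply]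
      have e2 := LinearMap.congr_fun (EpiAux.assoc_natural_left (LinearMap.inl k V₁ V₂))
        ((r₁.ρ).rTensor A (r₁.ρ v))
      simp only [LinearMap.comp_apply, LinearEquiv.coe_coe] at e2
      rw [e2]
      have e3 := LinearMap.congr_fun r₁.coassoc v
      simp only [LinearMap.comp_apply, LinearEquiv.coe_coe] at e3 ⊢
      rw [e3, ← LinearMap.comp_apply, LinearMap.rTensor_comp_lTensor,
        ← LinearMap.lTensor_comp_rTensor, LinearMap.comp_apply]
    · -- inr component
      rw [← LinearMap.rTensor_comp_apply, LinearMap.coprod_inr, LinearMap.rTensor_comp_apply]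
      have e2 := LinearMap.congr_fun (EpiAux.assoc_natural_left (LinearMap.inr k V₁ V₂))
        ((r₂.ρ).rTensor A (r₂.ρ v))
      simp only [LinearMap.comp_apply, LinearEquiv.coe_coe] at e2
      rw [e2]
      have e3 := LinearMap.congr_fun r₂.coassoc v
      simp only [LinearMap.comp_apply, LinearEquiv.coe_coe] at e3 ⊢
      rw [e3, ← LinearMap.comp_apply, LinearMap.rTensor_comp_lTensor,
        ← LinearMap.lTensor_comp_rTensor, LinearMap.comp_apply]
  counit := by
    apply LinearMap.prod_ext <;> apply LinearMap.ext <;> intro v <;>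
      simp only [LinearMap.comp_apply, LinearEquiv.coe_coe, LinearMap.coprod_inl,
        LinearMap.coprod_inr, LinearMap.coprod_apply, LinearMap.inl_apply,
        LinearMap.inr_apply, map_zero, add_zero, zero_add, LinearMap.id_apply]
    · rw [← LinearMap.comp_apply ((Coalgebra.counit (R := k) (A := A)).lTensor (V₁ × V₂)),
        LinearMap.lTensor_comp_rTensor, ← LinearMap.rTensor_comp_lTensor,
        LinearMap.comp_apply]
      have e4 := LinearMap.congr_fun (EpiAux.rid_natural (LinearMap.inl k V₁ V₂))
        ((Coalgebra.counit (R := k)).lTensor V₁ (r₁.ρ v))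
      simp only [LinearMap.comp_apply, LinearEquiv.coe_coe] at e4
      rw [e4]
      have e5 := LinearMap.congr_fun r₁.counit v
      simp only [LinearMap.comp_apply, LinearEquiv.coe_coe, LinearMap.id_apply] at e5
      rw [e5]
      rfl
    · rw [← LinearMap.comp_apply ((Coalgebra.counit (R := k) (A := A)).lTensor (V₁ × V₂)),
        LinearMap.lTensor_comp_rTensor, ← LinearMap.rTensor_comp_lTensor,
        LinearMap.comp_apply]
      have e4 := LinearMap.congr_fun (EpiAux.rid_natural (LinearMap.inr k V₁ V₂))
        ((Coalgebra.counit (R := k)).lTensor V₂ (r₂.ρ v))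
      simp only [LinearMap.comp_apply, LinearEquiv.coe_coe] at e4
      rw [e4]
      have e5 := LinearMap.congr_fun r₂.counit v
      simp only [LinearMap.comp_apply, LinearEquiv.coe_coe, LinearMap.id_apply] at e5
      rw [e5]
      rfl

end Prod

/-- If every direct sum decomposition of a finite-dimensional `G`-module into
`H`-submodules is a decomposition into `G`-submodules, then `H` is affine epimorphic
in `G`. -/
theorem affineEpimorphic_of_decompositions_descend
    (k A B : Type) [Field k] [CommRing A] [HopfAlgebra k A] [CommRing B]
    [HopfAlgebra k B] (hA : Algebra.FiniteType k A) (hB : Algebra.FiniteType k B)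
    (π : A →ₐc[k] B) (hπ : Function.Surjective π)
    (hdec : ∀ (V : Type) (_ : AddCommGroup V) (_ : Module k V)
      (_ : FiniteDimensional k V) (r : RationalRep k A V) (V₁ V₂ : Submodule k V),
      IsCompl V₁ V₂ → r.IsSubrepUnder π V₁ → r.IsSubrepUnder π V₂ →
      r.IsSubrep V₁ ∧ r.IsSubrep V₂) :
    IsAffineEpimorphic k A B π := by
  classical
  intro A' iCR iHA hft φ₁ φ₂ hφ
  obtain ⟨s, hs⟩ := hft
  obtain ⟨V, hfd, hsV, hsub⟩ := EpiAux.exists_fd_subcomodule_finset (k := k) (A' := A') s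
  haveI := hfd
  set r' : RationalRep k A' ↥V := subRep V hsub with hr'
  set rr : RationalRep k A (↥V × ↥V) := RationalRep.prodRep (r'.push φ₁) (r'.push φ₂) with hrr
  set d : ↥V →ₗ[k] ↥V × ↥V := LinearMap.prod LinearMap.id LinearMap.id with hd
  set D : Submodule k (↥V × ↥V) := LinearMap.range d with hD
  set F : Submodule k (↥V × ↥V) := LinearMap.range (LinearMap.inl k ↥V ↥V) with hF
  have hrrρ : ∀ w : ↥V × ↥V, rr.ρ w
      = (LinearMap.inl k ↥V ↥V).rTensor A ((φ₁ : A' →ₗ[k] A).lTensor ↥V (r'.ρ w.1))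
      + (LinearMap.inr k ↥V ↥V).rTensor A ((φ₂ : A' →ₗ[k] A).lTensor ↥V (r'.ρ w.2)) := by
    intro w
    simp [hrr, RationalRep.prodRep, RationalRep.push]
  have hdv : ∀ v : ↥V, d v = (v, v) := fun v => rfl
  have hcompl : IsCompl D F := by
    constructor
    · rw [disjoint_iff_inf_le]
      intro x hx
      obtain ⟨hx1, hx2⟩ := Submodule.mem_inf.mp hx
      obtain ⟨v, hv⟩ := hx1
      obtain ⟨w, hw⟩ := hx2
      have h2 : x.2 = v := by rw [← hv]; rfl
      have h2' : x.2 = 0 := by rw [← hw]; rfl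
      have h0 : x = 0 := by
        have hv0 : v = 0 := h2.symm.trans h2'
        rw [hv.symm.trans (hdv v), hv0]
        rfl
      simp [h0]
    · rw [codisjoint_iff, eq_top_iff]
      rintro ⟨x, y⟩ -
      refine Submodule.mem_sup.mpr ⟨d y, ⟨y, rfl⟩, (x - y, 0), ⟨x - y, rfl⟩, ?_⟩
      rw [hdv]
      exact Prod.ext (by simp) (by simp)
  have hπcomp : ((π : A →ₗ[k] B) ∘ₗ (φ₁ : A' →ₗ[k] A))
      = ((π : A →ₗ[k] B) ∘ₗ (φ₂ : A' →ₗ[k] A)) := by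
    apply LinearMap.ext
    intro x
    have := DFunLike.congr_fun hφ x
    simpa using this
  have h₁ : rr.IsSubrepUnder π D := by
    rintro w ⟨v, rfl⟩
    rw [hrrρ, show (d v).1 = v from rfl, show (d v).2 = v from rfl, map_add,
      EpiAux.lTensor_rTensor_swap, EpiAux.lTensor_rTensor_swap]
    have hc : ∀ (ψ : A' →ₐc[k] A), (π : A →ₗ[k] B).lTensor ↥V
        ((ψ : A' →ₗ[k] A).lTensor ↥V (r'.ρ v))
        = ((π : A →ₗ[k] B) ∘ₗ (ψ : A' →ₗ[k] A)).lTensor ↥V (r'.ρ v) := by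
      intro ψ
      rw [← LinearMap.comp_apply, ← LinearMap.lTensor_comp]
    rw [hc φ₁, hc φ₂, hπcomp]
    set T := ((π : A →ₗ[k] B) ∘ₗ (φ₂ : A' →ₗ[k] A)).lTensor ↥V (r'.ρ v) with hT
    have : (LinearMap.inl k ↥V ↥V).rTensor B T + (LinearMap.inr k ↥V ↥V).rTensor B T
        = d.rTensor B T := by
      have hdsum : (LinearMap.inl k ↥V ↥V) + (LinearMap.inr k ↥V ↥V) = d := by
        apply LinearMap.ext
        intro u
        show ((u, 0) : ↥V × ↥V) + (0, u) = (u, u)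
        rw [Prod.mk_add_mk, add_zero, zero_add]
      rw [← LinearMap.add_apply, ← LinearMap.rTensor_add, hdsum]
    rw [this]
    exact EpiAux.rTensor_range_mem d T
  have h₂ : rr.IsSubrepUnder π F := by
    rintro w ⟨v, rfl⟩
    have h0 : ((LinearMap.inl k ↥V ↥V) v).2 = 0 := rfl
    rw [hrrρ, h0]
    simp only [map_zero, add_zero]
    rw [EpiAux.lTensor_rTensor_swap]
    exact EpiAux.rTensor_range_mem (LinearMap.inl k ↥V ↥V) _
  obtain ⟨hDsub, -⟩ := hdec (↥V × ↥V) inferInstance inferInstance inferInstance rr D F hcompl h₁ h₂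
  have key : ∀ v : ↥V, (φ₁ : A' →ₗ[k] A).lTensor ↥V (r'.ρ v)
      = (φ₂ : A' →ₗ[k] A).lTensor ↥V (r'.ρ v) := by
    intro v
    obtain ⟨t, ht⟩ := hDsub (d v) ⟨v, rfl⟩
    have hfs : (LinearMap.fst k ↥V ↥V) ∘ₗ D.subtype = (LinearMap.snd k ↥V ↥V) ∘ₗ D.subtype := by
      apply LinearMap.ext
      rintro ⟨x, v', rfl⟩
      rfl
    have h1 := congrArg ((LinearMap.fst k ↥V ↥V).rTensor A) ht
    have h2 := congrArg ((LinearMap.snd k ↥V ↥V).rTensor A) ht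
    rw [← LinearMap.rTensor_comp_apply] at h1 h2
    rw [hfs, LinearMap.rTensor_comp_apply] at h1
    rw [LinearMap.rTensor_comp_apply] at h2
    have h3 : (LinearMap.fst k ↥V ↥V).rTensor A (rr.ρ (d v))
        = (LinearMap.snd k ↥V ↥V).rTensor A (rr.ρ (d v)) := by
      rw [← h1, ← h2]
    rw [hrrρ] at h3
    simp only [map_add, ← LinearMap.rTensor_comp_apply, LinearMap.fst_comp_inl,
      LinearMap.fst_comp_inr, LinearMap.snd_comp_inl, LinearMap.snd_comp_inr,
      LinearMap.rTensor_id, LinearMap.rTensor_zero, LinearMap.id_apply,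
      LinearMap.zero_apply, add_zero, zero_add] at h3
    exact h3
  have keyA : ∀ v : ↥V, φ₁ (v : A') = φ₂ (v : A') := by
    have claim : ∀ (ψ : A' →ₐc[k] A) (v : ↥V),
        (TensorProduct.lid k A) ((((Coalgebra.counit (R := k)) ∘ₗ V.subtype).rTensor A)
          ((ψ : A' →ₗ[k] A).lTensor ↥V (r'.ρ v))) = ψ (v : A') := by
      intro ψ v
      rw [← EpiAux.lTensor_rTensor_swap]
      have s2 : ((Coalgebra.counit (R := k)) ∘ₗ V.subtype).rTensor A' (r'.ρ v)
          = (1 : k) ⊗ₜ[k] (v : A') := by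
        rw [LinearMap.rTensor_comp, LinearMap.comp_apply]
        rw [show V.subtype.rTensor A' (r'.ρ v) = Coalgebra.comul (R := k) (v : A')
          from subComul_spec V hsub v]
        exact Coalgebra.rTensor_counit_comul (R := k) _
      rw [s2]
      simp
    intro v
    rw [← claim φ₁ v, ← claim φ₂ v, key v]
  have halg : (φ₁ : A' →ₐ[k] A) = (φ₂ : A' →ₐ[k] A) := by
    apply AlgHom.ext_of_adjoin_eq_top hs
    intro x hx
    have := keyA ⟨x, hsV hx⟩
    simpa using this
  apply DFunLike.ext
  intro x
  have := DFunLike.congr_fun halg x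
  simpa using this
end

section
/- For an affine algebraic subgroup N and an algebraic subgroup H with N normalized by H, the largest anti-affine subgroup of the semidirect product N ⋊ H equals H_ant (embedded via H). In particular (N·H)_ant = H_ant inside G. -/
open AlgebraicGeometry CategoryTheory

universe u

/-- `Spec k` as a scheme. -/
noncomputable abbrev SpecK (k : Type) [Field k] : Scheme := Spec (CommRingCat.of k)

/-- An algebraic group over `k`: a scheme of finite type over `k` together with a
natural group structure on its functor of points on `k`-schemes. -/
structure GroupScheme (k : Type) [Field k] : Type 1 where
  X : Over (SpecK k)
  locallyOfFiniteType : LocallyOfFiniteType X.hom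
  quasiCompact : QuasiCompact X.hom
  mul : ∀ (T : Over (SpecK k)), (T ⟶ X) → (T ⟶ X) → (T ⟶ X)
  one : ∀ (T : Over (SpecK k)), (T ⟶ X)
  inv : ∀ (T : Over (SpecK k)), (T ⟶ X) → (T ⟶ X)
  mul_assoc : ∀ (T : Over (SpecK k)) (a b c : T ⟶ X),
    mul T (mul T a b) c = mul T a (mul T b c)
  one_mul : ∀ (T : Over (SpecK k)) (a : T ⟶ X), mul T (one T) a = a
  mul_one : ∀ (T : Over (SpecK k)) (a : T ⟶ X), mul T a (one T) = a
  inv_mul : ∀ (T : Over (SpecK k)) (a : T ⟶ X), mul T (inv T a) a = one T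
  comp_mul : ∀ {T' T : Over (SpecK k)} (σ : T' ⟶ T) (a b : T ⟶ X),
    σ ≫ mul T a b = mul T' (σ ≫ a) (σ ≫ b)
  comp_one : ∀ {T' T : Over (SpecK k)} (σ : T' ⟶ T), σ ≫ one T = one T'
  comp_inv : ∀ {T' T : Over (SpecK k)} (σ : T' ⟶ T) (a : T ⟶ X),
    σ ≫ inv T a = inv T' (σ ≫ a)

variable {k : Type} [Field k]

/-- A homomorphism of algebraic groups over `k`. -/
@[ext]
structure GroupSchemeHom (G G' : GroupScheme k) where
  hom : G.X ⟶ G'.X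
  hom_mul : ∀ (T : Over (SpecK k)) (a b : T ⟶ G.X),
    G.mul T a b ≫ hom = G'.mul T (a ≫ hom) (b ≫ hom)

/-- An algebraic subgroup: a closed immersion of algebraic groups. -/
structure SubgroupOf (G : GroupScheme k) where
  grp : GroupScheme k
  emb : GroupSchemeHom grp G
  closed : IsClosedImmersion emb.hom.left

/-- A subgroup is epimorphic if morphisms of algebraic groups out of `G` are determined
by their restriction to the subgroup. -/
def IsEpimorphicSubgroup {G : GroupScheme k} (H : SubgroupOf G) : Prop :=
  ∀ (G' : GroupScheme k) (f₁ f₂ : GroupSchemeHom G G'),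
    H.emb.hom ≫ f₁.hom = H.emb.hom ≫ f₂.hom → f₁ = f₂

/-- `q : G ⟶ Q` is the (categorical) quotient of `G` by the right translation action of
the subgroup `H`. -/
structure IsQuotientBy (G : GroupScheme k) (H : SubgroupOf G) {Q : Over (SpecK k)}
    (q : G.X ⟶ Q) : Prop where
  invariant : ∀ (T : Over (SpecK k)) (g : T ⟶ G.X) (h : T ⟶ H.grp.X),
    G.mul T g (h ≫ H.emb.hom) ≫ q = g ≫ q
  universal : ∀ (Z : Over (SpecK k)) (f : G.X ⟶ Z),
    (∀ (T : Over (SpecK k)) (g : T ⟶ G.X) (h : T ⟶ H.grp.X),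
      G.mul T g (h ≫ H.emb.hom) ≫ f = g ≫ f) →
    ∃! f' : Q ⟶ Z, q ≫ f' = f

/-- A scheme over `k` has only constant global functions, i.e. `O(X) = k`. -/
def OnlyConstantFunctions (X : Over (SpecK k)) : Prop :=
  Function.Bijective (Scheme.Γ.map X.hom.op)


/-- `K ≤ H` as subgroups of `G`: the embedding of `K` factors through that of `H`. -/
def SubgroupLE {k : Type} [Field k] {G : GroupScheme k} (K H : SubgroupOf G) : Prop :=
  ∃ j : GroupSchemeHom K.grp H.grp, j.hom ≫ H.emb.hom = K.emb.hom

/-- `A` is the largest anti-affine subgroup of `G`. -/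
def IsLargestAntiAffineSubgroup {k : Type} [Field k] {G : GroupScheme k}
    (A : SubgroupOf G) : Prop :=
  OnlyConstantFunctions A.grp.X ∧
    ∀ B : SubgroupOf G, OnlyConstantFunctions B.grp.X → SubgroupLE B A

/-- Any homomorphism of algebraic groups preserves the unit. -/
lemma gs_hom_one {k : Type} [Field k] {G G' : GroupScheme k} (f : GroupSchemeHom G G')
    (T : Over (SpecK k)) : G.one T ≫ f.hom = G'.one T := by
  have h : G.one T ≫ f.hom =
      G'.mul T (G.one T ≫ f.hom) (G.one T ≫ f.hom) := by
    conv_lhs => rw [← G.mul_one T (G.one T)]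
    rw [f.hom_mul]
  set x := G.one T ≫ f.hom with hx
  have h1 : G'.mul T (G'.inv T x) (G'.mul T x x) = G'.mul T (G'.inv T x) x := by rw [← h]
  rw [← G'.mul_assoc, G'.inv_mul, G'.one_mul] at h1
  exact h1

/-- A closed immersion of schemes over `k` is a monomorphism in the over category. -/
lemma mono_of_closed {k : Type} [Field k] {X Y : Over (SpecK k)} (f : X ⟶ Y)
    (hf : IsClosedImmersion f.left) : Mono f := by
  haveI := hf
  haveI : Mono f.left := inferInstance
  exact (Over.forget _).mono_of_mono_map this

/-- A morphism from an anti-affine scheme to an affine scheme over `k` is constant. -/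
lemma const_of_antiaffine {k : Type} [Field k] {X Y : Over (SpecK k)}
    (hX : OnlyConstantFunctions X) (hY : IsAffine Y.left)
    (e : Over.mk (𝟙 (SpecK k)) ⟶ X) (n : X ⟶ Y) :
    n.left = X.hom ≫ (e.left ≫ n.left) := by
  haveI := hY
  have hbij : Function.Bijective X.hom.appTop := hX
  have hw : e.left ≫ X.hom = 𝟙 (SpecK k) := Over.w e
  apply ext_of_isAffine
  ext a
  show n.left.appTop a = (X.hom ≫ e.left ≫ n.left).appTop a
  obtain ⟨c, hc⟩ := hbij.2 (n.left.appTop a)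
  have key : e.left.appTop (n.left.appTop a) = c := by
    rw [← hc]
    have h2 : (Scheme.Hom.appTop e.left) ((Scheme.Hom.appTop X.hom) c)
        = (Scheme.Hom.appTop (e.left ≫ X.hom)) c := rfl
    rw [h2, hw]
    simp
  calc n.left.appTop a = X.hom.appTop c := hc.symm
    _ = X.hom.appTop (e.left.appTop (n.left.appTop a)) := by rw [key]
    _ = (X.hom ≫ e.left ≫ n.left).appTop a := by simp; rfl

/-- Let `G = N ⋊ H` be a semidirect product with `N` affine.  Then the largest
anti-affine subgroup of `G` is `H_ant`, embedded via `H`.  The semidirect product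
structure is expressed by unique factorization of every point of `G` as a product of a
point of `N` and a point of `H`. -/
theorem ant_of_semidirect_product_eq_ant_of_factor
    {k : Type} [Field k] (G : GroupScheme k) (N H : SubgroupOf G)
    (hNaff : IsAffine N.grp.X.left)
    (hNnormal : ∀ (T : Over (SpecK k)) (g : T ⟶ G.X) (n : T ⟶ N.grp.X),
      ∃ n' : T ⟶ N.grp.X,
        G.mul T (G.mul T g (n ≫ N.emb.hom)) (G.inv T g) = n' ≫ N.emb.hom)
    (hsemidirect : ∀ (T : Over (SpecK k)) (g : T ⟶ G.X),
      ∃! p : (T ⟶ N.grp.X) × (T ⟶ H.grp.X),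
        G.mul T (p.1 ≫ N.emb.hom) (p.2 ≫ H.emb.hom) = g)
    (A : SubgroupOf G) (hA : IsLargestAntiAffineSubgroup A)
    (B : SubgroupOf H.grp) (hB : IsLargestAntiAffineSubgroup B) :
    ∃ u : A.grp.X ⟶ B.grp.X, IsIso u ∧
      u ≫ B.emb.hom ≫ H.emb.hom = A.emb.hom := by
  classical
  obtain ⟨⟨n, h⟩, heq, -⟩ := hsemidirect A.grp.X A.emb.hom
  dsimp only at heq
  set term : Over (SpecK k) := Over.mk (𝟙 (SpecK k)) with hterm
  set e : term ⟶ A.grp.X := A.grp.one term with he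
  -- the projection of `A` to `N` is the constant unit map
  have hone : e ≫ n = N.grp.one term := by
    obtain ⟨p, -, hup⟩ := hsemidirect term (G.one term)
    have h1 : (e ≫ n, e ≫ h) = p := by
      apply hup
      dsimp only
      rw [Category.assoc, Category.assoc, ← G.comp_mul, heq, gs_hom_one A.emb]
    have h2 : (N.grp.one term, H.grp.one term) = p := by
      apply hup
      dsimp only
      rw [gs_hom_one N.emb, gs_hom_one H.emb, G.one_mul]
    have := h1.trans h2.symm
    exact congrArg Prod.fst this
  -- constancy of `n`
  have hn : n = N.grp.one A.grp.X := by
    have hconst : n.left = A.grp.X.hom ≫ (e.left ≫ n.left) :=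
      const_of_antiaffine hA.1 hNaff e n
    have hσ : (Over.homMk A.grp.X.hom (Category.comp_id _) : A.grp.X ⟶ term) ≫ (e ≫ n) = n := by
      apply Over.OverMorphism.ext
      simpa using hconst.symm
    rw [← hσ, hone, N.grp.comp_one]
  -- `A` factors through `H`
  have hfac : h ≫ H.emb.hom = A.emb.hom := by
    rw [← heq, hn, gs_hom_one N.emb, G.one_mul]
  haveI hmonoH : Mono H.emb.hom := mono_of_closed _ H.closed
  haveI hmonoA : Mono A.emb.hom := mono_of_closed _ A.closed
  -- `h` is a homomorphism of algebraic groups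
  have hhom_mul : ∀ (T : Over (SpecK k)) (a b : T ⟶ A.grp.X),
      A.grp.mul T a b ≫ h = H.grp.mul T (a ≫ h) (b ≫ h) := by
    intro T a b
    rw [← cancel_mono H.emb.hom, Category.assoc, hfac, A.emb.hom_mul,
      H.emb.hom_mul, ← hfac]
    simp only [Category.assoc]
  -- `h` is a closed immersion
  have hleft : A.emb.hom.left = h.left ≫ H.emb.hom.left := by
    rw [← hfac]; rfl
  have hclosed : IsClosedImmersion h.left := by
    haveI := H.closed
    haveI : IsClosedImmersion (h.left ≫ H.emb.hom.left) := by
      rw [← hleft]; exact A.closed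
    exact IsClosedImmersion.of_comp_isClosedImmersion h.left H.emb.hom.left
  -- `A` as a subgroup of `H`
  set A' : SubgroupOf H.grp := ⟨A.grp, ⟨h, hhom_mul⟩, hclosed⟩ with hA'
  obtain ⟨u, hu⟩ := hB.2 A' hA.1
  have hu' : u.hom ≫ B.emb.hom = h := hu
  -- `B` as a subgroup of `G`
  have hBGhom_mul : ∀ (T : Over (SpecK k)) (a b : T ⟶ B.grp.X),
      B.grp.mul T a b ≫ (B.emb.hom ≫ H.emb.hom) =
        G.mul T (a ≫ (B.emb.hom ≫ H.emb.hom)) (b ≫ (B.emb.hom ≫ H.emb.hom)) := by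
    intro T a b
    rw [← Category.assoc, B.emb.hom_mul, H.emb.hom_mul]
    simp only [Category.assoc]
  have hBGclosed : IsClosedImmersion (B.emb.hom ≫ H.emb.hom).left := by
    haveI := H.closed
    haveI := B.closed
    show IsClosedImmersion (B.emb.hom.left ≫ H.emb.hom.left)
    infer_instance
  set B' : SubgroupOf G := ⟨B.grp, ⟨B.emb.hom ≫ H.emb.hom, hBGhom_mul⟩, hBGclosed⟩ with hB'
  obtain ⟨v, hv⟩ := hA.2 B' hB.1
  have hv' : v.hom ≫ A.emb.hom = B.emb.hom ≫ H.emb.hom := hv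
  haveI hmonoBH : Mono (B.emb.hom ≫ H.emb.hom) := by
    haveI : Mono B.emb.hom := mono_of_closed _ B.closed
    infer_instance
  have huv : u.hom ≫ v.hom = 𝟙 _ := by
    rw [← cancel_mono A.emb.hom, Category.assoc, hv', ← Category.assoc, hu', hfac,
      Category.id_comp]
  have hvu : v.hom ≫ u.hom = 𝟙 _ := by
    rw [← cancel_mono (B.emb.hom ≫ H.emb.hom), Category.assoc, ← Category.assoc u.hom,
      hu', hfac, hv', Category.id_comp]
  refine ⟨u.hom, ⟨v.hom, huv, hvu⟩, ?_⟩
  rw [← Category.assoc, hu', hfac]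
end
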